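/- arXiv:0802.2645 — 5 statements merged into one kernel-verified Lean document; each statement's English description precedes it below -/
import Mathlib

section
/- Let {X_i; i ≥ 1} be a sequence of negatively associated random variables and let {a_{nj}; 1 ≤ j ≤ n, n ≥ 1} be an array of real numbers. Then there exists a constant A > 0 such that for all n ≥ 1 and all ε > 0: (1/2) ∑_{j=1}^n P(|a_{nj} X_j| > ε) ≤ (1 + A) P( max_{1≤j≤n} |a_{nj} X_j| > ε ) + ( ∑_{j=1}^n P(|a_{nj} X_j| > ε) ) · P( max_{1≤j≤n} |a_{nj} X_j| > ε ). -/
open MeasureTheory Finset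

noncomputable section

/-- A family of real-valued random variables is *negatively associated* if for every
pair of disjoint nonempty finite index sets `A` and `B`, and every pair of functions
`f`, `g` which are coordinatewise nondecreasing in the coordinates of `A` (resp. `B`),
the covariance of `f` and `g` applied to the family is nonpositive (whenever all the
relevant integrals exist). -/
def NegAssoc {Ω : Type*} [MeasurableSpace Ω] (μ : Measure Ω)
    {ι : Type*} (X : ι → Ω → ℝ) : Prop :=
  ∀ (A B : Finset ι), A.Nonempty → B.Nonempty → Disjoint A B →
    ∀ f g : (ι → ℝ) → ℝ,
      (∀ x y : ι → ℝ, (∀ i ∈ A, x i ≤ y i) → f x ≤ f y) →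
      (∀ x y : ι → ℝ, (∀ j ∈ B, x j ≤ y j) → g x ≤ g y) →
      Integrable (fun ω => f (fun i => X i ω)) μ →
      Integrable (fun ω => g (fun i => X i ω)) μ →
      Integrable (fun ω => f (fun i => X i ω) * g (fun i => X i ω)) μ →
      ∫ ω, f (fun i => X i ω) * g (fun i => X i ω) ∂μ ≤
        (∫ ω, f (fun i => X i ω) ∂μ) * ∫ ω, g (fun i => X i ω) ∂μ

/-- `partialSum X n ω = ∑_{i=1}^n X_i(ω)`. -/
def partialSum {Ω : Type*} (X : ℕ → Ω → ℝ) (n : ℕ) (ω : Ω) : ℝ :=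
  ∑ i ∈ Finset.Icc 1 n, X i ω

/-- `maxPS X n ω = max_{1 ≤ k ≤ n} |S_k(ω)|`. -/
def maxPS {Ω : Type*} (X : ℕ → Ω → ℝ) (n : ℕ) (ω : Ω) : ℝ :=
  (((Finset.Icc 1 n).sup fun k => ‖partialSum X k ω‖₊ : NNReal) : ℝ)

/-- `maxA a X n ω = max_{1 ≤ j ≤ n} |a_{nj} X_j(ω)|`. -/
def maxA {Ω : Type*} (a : ℕ → ℕ → ℝ) (X : ℕ → Ω → ℝ) (n : ℕ) (ω : Ω) : ℝ :=
  (((Finset.Icc 1 n).sup fun j => ‖a n j * X j ω‖₊ : NNReal) : ℝ)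

lemma amgm_aux {t u : ℝ} (ht : 0 < t) : u ≤ u ^ 2 / (2 * t) + t / 2 := by
  rw [div_add' _ _ _ (by positivity), le_div_iff₀ (by positivity)]
  nlinarith [sq_nonneg (u - t)]

/-- Second moment / AM-GM bound: for pairwise negatively correlated events,
the sum of probabilities is controlled by the probability of the union. -/
lemma key_bound {Ω : Type*} [MeasurableSpace Ω] (μ : Measure Ω) [IsProbabilityMeasure μ]
    (T : Finset ℕ) (F : ℕ → Set Ω) (hF : ∀ j ∈ T, MeasurableSet (F j))
    (hpair : ∀ i ∈ T, ∀ j ∈ T, i ≠ j →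
      (μ (F i ∩ F j)).toReal ≤ (μ (F i)).toReal * (μ (F j)).toReal) :
    ∑ j ∈ T, (μ (F j)).toReal ≤
      (μ (⋃ j ∈ T, F j)).toReal * (1 + ∑ j ∈ T, (μ (F j)).toReal) := by
  classical
  set G : Set Ω := ⋃ j ∈ T, F j with hGdef
  have hGmeas : MeasurableSet G := T.measurableSet_biUnion hF
  set S : ℝ := ∑ j ∈ T, (μ (F j)).toReal with hSdef
  have hSnonneg : 0 ≤ S := Finset.sum_nonneg fun j _ => ENNReal.toReal_nonneg
  set t : ℝ := 1 + S with htdef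
  have ht : 0 < t := by positivity
  set N : Ω → ℝ := fun ω => ∑ j ∈ T, (F j).indicator (fun _ => (1:ℝ)) ω with hNdef
  -- N² = double sum of indicators of intersections
  have hNsq : ∀ ω, N ω ^ 2 = ∑ i ∈ T, ∑ j ∈ T, (F i ∩ F j).indicator (fun _ => (1:ℝ)) ω := by
    intro ω
    rw [sq, hNdef]
    rw [Finset.sum_mul_sum]
    refine Finset.sum_congr rfl fun i _ => Finset.sum_congr rfl fun j _ => ?_
    by_cases hi : ω ∈ F i <;> by_cases hj : ω ∈ F j <;>
      simp [Set.indicator_apply, hi, hj, Set.mem_inter_iff]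
  -- pointwise inequality
  have hpt : ∀ ω, N ω ≤ (∑ i ∈ T, ∑ j ∈ T, (F i ∩ F j).indicator (fun _ => (1:ℝ)) ω) / (2 * t)
      + (t / 2) * G.indicator (fun _ => (1:ℝ)) ω := by
    intro ω
    rw [← hNsq ω]
    by_cases hG : ω ∈ G
    · rw [Set.indicator_of_mem hG]
      have h := amgm_aux (u := N ω) ht
      calc N ω ≤ N ω ^ 2 / (2 * t) + t / 2 := h
        _ = N ω ^ 2 / (2 * t) + t / 2 * 1 := by ring
    · have hN0 : N ω = 0 := by
        rw [hNdef]
        refine Finset.sum_eq_zero fun j hj => ?_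
        have : ω ∉ F j := fun h => hG (Set.subset_biUnion_of_mem hj h)
        simp [Set.indicator_of_notMem this]
      rw [Set.indicator_of_notMem hG, hN0]
      positivity
  have hintF : ∀ j ∈ T, Integrable ((F j).indicator (fun _ => (1:ℝ))) μ :=
    fun j hj => (integrable_const (1:ℝ)).indicator (hF j hj)
  have hintFF : ∀ i ∈ T, ∀ j ∈ T, Integrable ((F i ∩ F j).indicator (fun _ => (1:ℝ))) μ :=
    fun i hi j hj => (integrable_const (1:ℝ)).indicator ((hF i hi).inter (hF j hj))
  have hNint : Integrable N μ := integrable_finset_sum T hintF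
  have hRint : Integrable (fun ω =>
      (∑ i ∈ T, ∑ j ∈ T, (F i ∩ F j).indicator (fun _ => (1:ℝ)) ω) / (2 * t)
      + (t / 2) * G.indicator (fun _ => (1:ℝ)) ω) μ := by
    refine Integrable.add ?_ ?_
    · exact (integrable_finset_sum T (fun i hi =>
        integrable_finset_sum T (fun j hj => hintFF i hi j hj))).div_const _
    · exact ((integrable_const (1:ℝ)).indicator hGmeas).const_mul _
  have hI1 : ∫ ω, N ω ∂μ = S := by
    rw [hNdef, integral_finset_sum T hintF]
    refine Finset.sum_congr rfl fun j hj => ?_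
    rw [integral_indicator_const (1:ℝ) (hF j hj)]; simp [Measure.real]
  have hI2 : ∫ ω, ((∑ i ∈ T, ∑ j ∈ T, (F i ∩ F j).indicator (fun _ => (1:ℝ)) ω) / (2 * t)
      + (t / 2) * G.indicator (fun _ => (1:ℝ)) ω) ∂μ
      = (∑ i ∈ T, ∑ j ∈ T, (μ (F i ∩ F j)).toReal) / (2 * t) + (t / 2) * (μ G).toReal := by
    rw [integral_add ((integrable_finset_sum T (fun i hi =>
        integrable_finset_sum T (fun j hj => hintFF i hi j hj))).div_const _)
        (((integrable_const (1:ℝ)).indicator hGmeas).const_mul _)]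
    congr 1
    · rw [integral_div, integral_finset_sum T (fun i hi =>
        integrable_finset_sum T (fun j hj => hintFF i hi j hj))]
      congr 1
      refine Finset.sum_congr rfl fun i hi => ?_
      rw [integral_finset_sum T (fun j hj => hintFF i hi j hj)]
      refine Finset.sum_congr rfl fun j hj => ?_
      rw [integral_indicator_const (1:ℝ) ((hF i hi).inter (hF j hj))]; simp [Measure.real]
    · rw [integral_const_mul, integral_indicator_const (1:ℝ) hGmeas]; simp [Measure.real]
  have hmain : S ≤ (∑ i ∈ T, ∑ j ∈ T, (μ (F i ∩ F j)).toReal) / (2 * t)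
      + (t / 2) * (μ G).toReal := by
    rw [← hI1, ← hI2]
    exact integral_mono hNint hRint hpt
  -- bound the double sum
  have hdouble : ∑ i ∈ T, ∑ j ∈ T, (μ (F i ∩ F j)).toReal ≤ S + S * S := by
    have h1 : ∀ i ∈ T, ∑ j ∈ T, (μ (F i ∩ F j)).toReal
        ≤ (μ (F i)).toReal + (μ (F i)).toReal * S := by
      intro i hi
      rw [← Finset.add_sum_erase _ _ hi, Set.inter_self]
      gcongr
      calc ∑ j ∈ T.erase i, (μ (F i ∩ F j)).toReal
          ≤ ∑ j ∈ T.erase i, (μ (F i)).toReal * (μ (F j)).toReal := by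
            refine Finset.sum_le_sum fun j hj => ?_
            exact hpair i hi j (Finset.mem_of_mem_erase hj)
              (fun h => (Finset.ne_of_mem_erase hj) h.symm)
        _ = (μ (F i)).toReal * ∑ j ∈ T.erase i, (μ (F j)).toReal := by
            rw [Finset.mul_sum]
        _ ≤ (μ (F i)).toReal * S := by
            refine mul_le_mul_of_nonneg_left ?_ ENNReal.toReal_nonneg
            exact Finset.sum_le_sum_of_subset_of_nonneg (Finset.erase_subset _ _)
              (fun _ _ _ => ENNReal.toReal_nonneg)
    calc ∑ i ∈ T, ∑ j ∈ T, (μ (F i ∩ F j)).toReal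
        ≤ ∑ i ∈ T, ((μ (F i)).toReal + (μ (F i)).toReal * S) :=
          Finset.sum_le_sum h1
      _ = S + S * S := by rw [Finset.sum_add_distrib, ← Finset.sum_mul, hSdef]
  have hST : S + S * S = S * t := by ring
  have hm : 0 ≤ (μ G).toReal := ENNReal.toReal_nonneg
  have hfin : S ≤ S / 2 + (t / 2) * (μ G).toReal := by
    calc S ≤ (∑ i ∈ T, ∑ j ∈ T, (μ (F i ∩ F j)).toReal) / (2 * t)
        + (t / 2) * (μ G).toReal := hmain
      _ ≤ (S * t) / (2 * t) + (t / 2) * (μ G).toReal := by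
          have h2t : (0:ℝ) < 2 * t := by positivity
          have := (div_le_div_iff_of_pos_right h2t).mpr (hST ▸ hdouble)
          linarith
      _ = S / 2 + (t / 2) * (μ G).toReal := by
          rw [mul_comm 2 t, mul_div_assoc S t, ← div_div, div_self (ne_of_gt ht)]
          ring_nf
  have : S / 2 ≤ (t / 2) * (μ G).toReal := by linarith
  calc S = 2 * (S / 2) := by ring
    _ ≤ 2 * ((t / 2) * (μ G).toReal) := by linarith
    _ = (μ G).toReal * (1 + S) := by rw [htdef]; ring


/-- NA implies pairwise negative correlation of "increasing" single-coordinate events. -/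
lemma na_pair {Ω : Type*} [MeasurableSpace Ω] (μ : Measure Ω) [IsProbabilityMeasure μ]
    (X : ℕ → Ω → ℝ) (hmeas : ∀ i, Measurable (X i))
    (hNA : NegAssoc μ (fun i => X (i + 1)))
    {i j : ℕ} (hi : 1 ≤ i) (hj : 1 ≤ j) (hij : i ≠ j)
    (c d : ℝ) (hc : 0 ≤ c) (hd : 0 ≤ d)
    (P Q : Set ℝ) (hPm : MeasurableSet P) (hQm : MeasurableSet Q)
    (hPu : ∀ u v : ℝ, u ≤ v → u ∈ P → v ∈ P)
    (hQu : ∀ u v : ℝ, u ≤ v → u ∈ Q → v ∈ Q) :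
    (μ ({ω | c * X i ω ∈ P} ∩ {ω | d * X j ω ∈ Q})).toReal ≤
      (μ {ω | c * X i ω ∈ P}).toReal * (μ {ω | d * X j ω ∈ Q}).toReal := by
  classical
  set S1 : Set Ω := {ω | c * X i ω ∈ P} with hS1def
  set S2 : Set Ω := {ω | d * X j ω ∈ Q} with hS2def
  have hS1m : MeasurableSet S1 := ((hmeas i).const_mul c) hPm
  have hS2m : MeasurableSet S2 := ((hmeas j).const_mul d) hQm
  set f : (ℕ → ℝ) → ℝ := fun x => P.indicator (fun _ => (1:ℝ)) (c * x (i - 1)) with hfdef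
  set g : (ℕ → ℝ) → ℝ := fun x => Q.indicator (fun _ => (1:ℝ)) (d * x (j - 1)) with hgdef
  have hfm : ∀ x y : (ℕ → ℝ), (∀ k ∈ ({i - 1} : Finset ℕ), x k ≤ y k) → f x ≤ f y := by
    intro x y hxy
    have hle : c * x (i - 1) ≤ c * y (i - 1) :=
      mul_le_mul_of_nonneg_left (hxy (i - 1) (Finset.mem_singleton_self _)) hc
    by_cases h : c * x (i - 1) ∈ P
    · have h2 : c * y (i - 1) ∈ P := hPu _ _ hle h
      simp [hfdef, Set.indicator_of_mem, h, h2]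
    · simp only [hfdef, Set.indicator_of_notMem h]
      exact Set.indicator_nonneg (fun _ _ => zero_le_one) _
  have hgm : ∀ x y : (ℕ → ℝ), (∀ k ∈ ({j - 1} : Finset ℕ), x k ≤ y k) → g x ≤ g y := by
    intro x y hxy
    have hle : d * x (j - 1) ≤ d * y (j - 1) :=
      mul_le_mul_of_nonneg_left (hxy (j - 1) (Finset.mem_singleton_self _)) hd
    by_cases h : d * x (j - 1) ∈ Q
    · have h2 : d * y (j - 1) ∈ Q := hQu _ _ hle h
      simp [hgdef, Set.indicator_of_mem, h, h2]
    · simp only [hgdef, Set.indicator_of_notMem h]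
      exact Set.indicator_nonneg (fun _ _ => zero_le_one) _
  have hi1 : i - 1 + 1 = i := Nat.succ_pred_eq_of_pos hi
  have hj1 : j - 1 + 1 = j := Nat.succ_pred_eq_of_pos hj
  have hfX : ∀ ω, f (fun k => X (k + 1) ω) = S1.indicator (fun _ => (1:ℝ)) ω := by
    intro ω
    simp only [hfdef, hi1]
    by_cases h : c * X i ω ∈ P
    · rw [Set.indicator_of_mem h, Set.indicator_of_mem (by exact h)]
    · rw [Set.indicator_of_notMem h, Set.indicator_of_notMem (by exact h)]
  have hgX : ∀ ω, g (fun k => X (k + 1) ω) = S2.indicator (fun _ => (1:ℝ)) ω := by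
    intro ω
    simp only [hgdef, hj1]
    by_cases h : d * X j ω ∈ Q
    · rw [Set.indicator_of_mem h, Set.indicator_of_mem (by exact h)]
    · rw [Set.indicator_of_notMem h, Set.indicator_of_notMem (by exact h)]
  have hfgX : ∀ ω, f (fun k => X (k + 1) ω) * g (fun k => X (k + 1) ω)
      = (S1 ∩ S2).indicator (fun _ => (1:ℝ)) ω := by
    intro ω
    rw [hfX ω, hgX ω]
    by_cases h1 : ω ∈ S1 <;> by_cases h2 : ω ∈ S2 <;>
      simp [Set.indicator_apply, h1, h2, Set.mem_inter_iff]
  have hif : Integrable (fun ω => f (fun k => X (k + 1) ω)) μ :=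
    ((integrable_const (1:ℝ)).indicator hS1m).congr (ae_of_all _ fun ω => (hfX ω).symm)
  have hig : Integrable (fun ω => g (fun k => X (k + 1) ω)) μ :=
    ((integrable_const (1:ℝ)).indicator hS2m).congr (ae_of_all _ fun ω => (hgX ω).symm)
  have hifg : Integrable (fun ω => f (fun k => X (k + 1) ω) * g (fun k => X (k + 1) ω)) μ :=
    ((integrable_const (1:ℝ)).indicator (hS1m.inter hS2m)).congr
      (ae_of_all _ fun ω => (hfgX ω).symm)
  have hdisj : Disjoint ({i - 1} : Finset ℕ) ({j - 1} : Finset ℕ) := by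
    rw [Finset.disjoint_singleton]
    omega
  have hmain := hNA {i - 1} {j - 1} (Finset.singleton_nonempty _) (Finset.singleton_nonempty _)
    hdisj f g hfm hgm hif hig hifg
  have e1 : ∫ ω, f (fun k => X (k + 1) ω) ∂μ = (μ S1).toReal := by
    rw [integral_congr_ae (ae_of_all _ hfX), integral_indicator_const (1:ℝ) hS1m]; simp [Measure.real]
  have e2 : ∫ ω, g (fun k => X (k + 1) ω) ∂μ = (μ S2).toReal := by
    rw [integral_congr_ae (ae_of_all _ hgX), integral_indicator_const (1:ℝ) hS2m]; simp [Measure.real]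
  have e3 : ∫ ω, f (fun k => X (k + 1) ω) * g (fun k => X (k + 1) ω) ∂μ
      = (μ (S1 ∩ S2)).toReal := by
    rw [integral_congr_ae (ae_of_all _ hfgX),
      integral_indicator_const (1:ℝ) (hS1m.inter hS2m)]; simp [Measure.real]
  rw [← e1, ← e2, ← e3]
  exact hmain


lemma prob_compl_toReal {Ω : Type*} [MeasurableSpace Ω] (μ : Measure Ω)
    [IsProbabilityMeasure μ] {s : Set Ω} (hs : MeasurableSet s) :
    (μ sᶜ).toReal = 1 - (μ s).toReal := by
  rw [prob_compl_eq_one_sub hs, ENNReal.toReal_sub_of_le prob_le_one ENNReal.one_ne_top,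
    ENNReal.toReal_one]


/-- Lemma 3.1 (first part): for negatively associated random variables and an array of
real weights, a maximal-term lower bound on the sum of tail probabilities. -/
theorem stmt_2 {Ω : Type*} [MeasurableSpace Ω] (μ : Measure Ω) [IsProbabilityMeasure μ]
    (X : ℕ → Ω → ℝ) (hmeas : ∀ i, Measurable (X i))
    (hNA : NegAssoc μ (fun i => X (i + 1)))
    (a : ℕ → ℕ → ℝ) :
    ∃ A : ℝ, 0 < A ∧ ∀ n : ℕ, 1 ≤ n → ∀ ε : ℝ, 0 < ε →
      (1 / 2) * ∑ j ∈ Finset.Icc 1 n, (μ {ω | ε < |a n j * X j ω|}).toReal ≤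
        (1 + A) * (μ {ω | ε < maxA a X n ω}).toReal +
          (∑ j ∈ Finset.Icc 1 n, (μ {ω | ε < |a n j * X j ω|}).toReal) *
            (μ {ω | ε < maxA a X n ω}).toReal := by
  classical
  refine ⟨1, one_pos, ?_⟩
  intro n hn ε hε
  set T : Finset ℕ := Finset.Icc 1 n with hTdef
  set G : Set Ω := {ω | ε < maxA a X n ω} with hGdef
  set m : ℝ := (μ G).toReal with hmdef
  set I : ℕ → Set Ω := fun j => {ω | ε < |a n j| * X j ω} with hIdef
  set D : ℕ → Set Ω := fun j => {ω | |a n j| * X j ω < -ε} with hDdef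
  set C : ℕ → Set Ω := fun j => {ω | -ε ≤ |a n j| * X j ω} with hCdef
  have hIm : ∀ j, MeasurableSet (I j) :=
    fun j => ((hmeas j).const_mul (|a n j|)) measurableSet_Ioi
  have hDm : ∀ j, MeasurableSet (D j) :=
    fun j => ((hmeas j).const_mul (|a n j|)) measurableSet_Iio
  have hCD : ∀ j, C j = (D j)ᶜ := by
    intro j
    ext ω
    simp [hCdef, hDdef, not_lt]
  -- |a n j| * X j ω relates to |a n j * X j ω|
  have habs : ∀ j ω, |(|a n j|) * X j ω| = |a n j * X j ω| := by
    intro j ω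
    rw [abs_mul, abs_mul, abs_abs]
  -- splitting of the events
  have hsplit : ∀ j, {ω | ε < |a n j * X j ω|} = I j ∪ D j := by
    intro j
    ext ω
    simp only [Set.mem_setOf_eq, Set.mem_union, hIdef, hDdef]
    constructor
    · intro h
      have h' : ε < |(|a n j|) * X j ω| := by rw [habs]; exact h
      rcases lt_abs.mp h' with h1 | h1
      · exact Or.inl h1
      · exact Or.inr (by linarith)
    · intro h
      have h' : ε < |(|a n j|) * X j ω| := by
        rcases h with h1 | h1
        · exact lt_abs.mpr (Or.inl h1)
        · exact lt_abs.mpr (Or.inr (by linarith))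
      rw [habs] at h'
      exact h'
  have hdisjID : ∀ j, Disjoint (I j) (D j) := by
    intro j
    rw [Set.disjoint_left]
    intro ω h1 h2
    simp only [hIdef, Set.mem_setOf_eq] at h1
    simp only [hDdef, Set.mem_setOf_eq] at h2
    linarith
  have hmeasE : ∀ j, (μ {ω | ε < |a n j * X j ω|}).toReal
      = (μ (I j)).toReal + (μ (D j)).toReal := by
    intro j
    rw [hsplit j, measure_union (hdisjID j) (hDm j),
      ENNReal.toReal_add (measure_ne_top μ _) (measure_ne_top μ _)]
  -- subsets of G
  have hnorm : ∀ j ∈ T, ∀ ω, |a n j * X j ω| ≤ maxA a X n ω := by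
    intro j hj ω
    have h := Finset.le_sup (f := fun k => ‖a n k * X k ω‖₊) hj
    calc |a n j * X j ω| = ((‖a n j * X j ω‖₊ : NNReal) : ℝ) := by
          rw [coe_nnnorm, Real.norm_eq_abs]
      _ ≤ maxA a X n ω := NNReal.coe_le_coe.mpr h
  have hIsub : ∀ j ∈ T, I j ⊆ G := by
    intro j hj ω hω
    simp only [hIdef, Set.mem_setOf_eq] at hω
    simp only [hGdef, Set.mem_setOf_eq]
    calc ε < |a n j| * X j ω := hω
      _ ≤ |(|a n j|) * X j ω| := le_abs_self _
      _ = |a n j * X j ω| := habs j ω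
      _ ≤ maxA a X n ω := hnorm j hj ω
  have hDsub : ∀ j ∈ T, D j ⊆ G := by
    intro j hj ω hω
    simp only [hDdef, Set.mem_setOf_eq] at hω
    simp only [hGdef, Set.mem_setOf_eq]
    calc ε < -(|a n j| * X j ω) := by linarith
      _ ≤ |(|a n j|) * X j ω| := neg_le_abs _
      _ = |a n j * X j ω| := habs j ω
      _ ≤ maxA a X n ω := hnorm j hj ω
  -- pairwise bounds
  have hpairI : ∀ i ∈ T, ∀ j ∈ T, i ≠ j →
      (μ (I i ∩ I j)).toReal ≤ (μ (I i)).toReal * (μ (I j)).toReal := by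
    intro i hi j hj hij
    exact na_pair μ X hmeas hNA (Finset.mem_Icc.mp hi).1 (Finset.mem_Icc.mp hj).1 hij
      (|a n i|) (|a n j|) (abs_nonneg _) (abs_nonneg _)
      (Set.Ioi ε) (Set.Ioi ε) measurableSet_Ioi measurableSet_Ioi
      (fun u v huv hu => lt_of_lt_of_le hu huv)
      (fun u v huv hu => lt_of_lt_of_le hu huv)
  have hpairD : ∀ i ∈ T, ∀ j ∈ T, i ≠ j →
      (μ (D i ∩ D j)).toReal ≤ (μ (D i)).toReal * (μ (D j)).toReal := by
    intro i hi j hj hij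
    have hC : (μ (C i ∩ C j)).toReal ≤ (μ (C i)).toReal * (μ (C j)).toReal :=
      na_pair μ X hmeas hNA (Finset.mem_Icc.mp hi).1 (Finset.mem_Icc.mp hj).1 hij
        (|a n i|) (|a n j|) (abs_nonneg _) (abs_nonneg _)
        (Set.Ici (-ε)) (Set.Ici (-ε)) measurableSet_Ici measurableSet_Ici
        (fun u v huv hu => le_trans hu huv)
        (fun u v huv hu => le_trans hu huv)
    have hCi : (μ (C i)).toReal = 1 - (μ (D i)).toReal := by
      rw [hCD i]; exact prob_compl_toReal μ (hDm i)
    have hCj : (μ (C j)).toReal = 1 - (μ (D j)).toReal := by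
      rw [hCD j]; exact prob_compl_toReal μ (hDm j)
    have hCij : C i ∩ C j = (D i ∪ D j)ᶜ := by
      rw [hCD i, hCD j, Set.compl_union]
    have hincl : (μ (D i ∪ D j)).toReal + (μ (D i ∩ D j)).toReal
        = (μ (D i)).toReal + (μ (D j)).toReal := by
      have h := measure_union_add_inter (μ := μ) (D i) (hDm j)
      have h' := congrArg ENNReal.toReal h
      rwa [ENNReal.toReal_add (measure_ne_top μ _) (measure_ne_top μ _),
        ENNReal.toReal_add (measure_ne_top μ _) (measure_ne_top μ _)] at h'
    have hcompl : (μ (C i ∩ C j)).toReal = 1 - (μ (D i ∪ D j)).toReal := by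
      rw [hCij]
      exact prob_compl_toReal μ ((hDm i).union (hDm j))
    rw [hCi, hCj, hcompl] at hC
    nlinarith [hC, hincl]
  -- apply the key bound to both families
  have hSI := key_bound μ T I (fun j _ => hIm j) hpairI
  have hSD := key_bound μ T D (fun j _ => hDm j) hpairD
  set SI : ℝ := ∑ j ∈ T, (μ (I j)).toReal with hSIdef
  set SD : ℝ := ∑ j ∈ T, (μ (D j)).toReal with hSDdef
  have hSInn : 0 ≤ SI := Finset.sum_nonneg fun _ _ => ENNReal.toReal_nonneg
  have hSDnn : 0 ≤ SD := Finset.sum_nonneg fun _ _ => ENNReal.toReal_nonneg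
  have hmnn : 0 ≤ m := ENNReal.toReal_nonneg
  have hUI : (μ (⋃ j ∈ T, I j)).toReal ≤ m := by
    refine ENNReal.toReal_mono (measure_ne_top μ G) (measure_mono ?_)
    exact Set.iUnion₂_subset hIsub
  have hUD : (μ (⋃ j ∈ T, D j)).toReal ≤ m := by
    refine ENNReal.toReal_mono (measure_ne_top μ G) (measure_mono ?_)
    exact Set.iUnion₂_subset hDsub
  have hI2 : SI ≤ m * (1 + SI) :=
    le_trans hSI (mul_le_mul_of_nonneg_right hUI (by linarith))
  have hD2 : SD ≤ m * (1 + SD) :=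
    le_trans hSD (mul_le_mul_of_nonneg_right hUD (by linarith))
  have hSsum : ∑ j ∈ T, (μ {ω | ε < |a n j * X j ω|}).toReal = SI + SD := by
    rw [hSIdef, hSDdef, ← Finset.sum_add_distrib]
    exact Finset.sum_congr rfl fun j _ => hmeasE j
  rw [hSsum]
  nlinarith [hI2, hD2, hSInn, hSDnn, hmnn, mul_nonneg hmnn hSInn, mul_nonneg hmnn hSDnn]

end
end

section
/- Let α ≥ −1 and β ≥ 0, and let {Y_n; n ≥ 1} be a nondecreasing sequence of nonnegative random variables (i.e., 0 ≤ Y_1 ≤ Y_2 ≤ ... pointwise). If ∑_{n≥1} n^α P(Y_n > x n^β) < ∞ for all x > 0, then lim_{n→∞} P(Y_n > x n^β) = 0 for all x > 0. -/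
open MeasureTheory Finset

noncomputable section

/-- Lemma 3.4: if `∑_{n ≥ 1} n^α P(Y_n > x n^β) < ∞` for all `x > 0`, for a nondecreasing
sequence of nonnegative random variables `Y_n`, then `P(Y_n > x n^β) → 0` for all `x > 0`. -/
theorem stmt_6 {Ω : Type*} [MeasurableSpace Ω] (μ : Measure Ω) [IsProbabilityMeasure μ]
    (α β : ℝ) (hα : -1 ≤ α) (hβ : 0 ≤ β)
    (Y : ℕ → Ω → ℝ) (hmeas : ∀ n, Measurable (Y n))
    (hnonneg : ∀ n ω, 0 ≤ Y n ω) (hmono : ∀ n ω, Y n ω ≤ Y (n + 1) ω)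
    (hsum : ∀ x : ℝ, 0 < x →
      ∑' n : ℕ, ENNReal.ofReal (((n : ℝ) + 1) ^ α) *
        μ {ω | x * ((n : ℝ) + 1) ^ β < Y (n + 1) ω} < ⊤) :
    ∀ x : ℝ, 0 < x →
      Filter.Tendsto (fun n : ℕ => μ {ω | x * (n : ℝ) ^ β < Y n ω})
        Filter.atTop (nhds 0) := by
  intro x hx
  have hmono' : ∀ ⦃m n : ℕ⦄, m ≤ n → ∀ ω, Y m ω ≤ Y n ω := by
    intro m n h ω
    exact (monotone_nat_of_le_succ (fun k => hmono k ω) : Monotone fun k => Y k ω) h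
  have h2β : (0:ℝ) < (2:ℝ) ^ β := Real.rpow_pos_of_pos (by norm_num) β
  set x' : ℝ := x / (2:ℝ) ^ β with hx'def
  have hx' : 0 < x' := div_pos hx h2β
  set f : ℕ → ENNReal := fun n => ENNReal.ofReal (((n : ℝ) + 1) ^ α) *
      μ {ω | x' * ((n : ℝ) + 1) ^ β < Y (n + 1) ω} with hf
  have hfsum : ∑' n, f n ≠ ⊤ := (hsum x' hx').ne
  set cmin : ℝ := min 1 ((2:ℝ) ^ α) with hcmin
  have hcminpos : 0 < cmin := lt_min one_pos (Real.rpow_pos_of_pos (by norm_num) α)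
  set c : ENNReal := ENNReal.ofReal cmin with hc
  have hcpos : c ≠ 0 := by
    simp [hc, ENNReal.ofReal_pos.mpr hcminpos, ne_of_gt (ENNReal.ofReal_pos.mpr hcminpos)]
  -- key bound
  have key : ∀ n : ℕ, c * μ {ω | x * ((n:ℝ) + 1) ^ β < Y (n + 1) ω} ≤ ∑' k, f (k + n) := by
    intro n
    set T : Set Ω := {ω | x * ((n:ℝ) + 1) ^ β < Y (n + 1) ω} with hT
    -- event inclusion
    have hsub : ∀ k ≤ n, T ⊆ {ω | x' * (((k + n : ℕ) : ℝ) + 1) ^ β < Y (k + n + 1) ω} := by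
      intro k hk ω hω
      have hω' : x * ((n:ℝ) + 1) ^ β < Y (n + 1) ω := hω
      have h1 : (((k + n : ℕ) : ℝ) + 1) ≤ 2 * ((n:ℝ) + 1) := by
        push_cast
        have : (k:ℝ) ≤ n := by exact_mod_cast hk
        linarith
      have h0 : (0:ℝ) ≤ ((k + n : ℕ) : ℝ) + 1 := by positivity
      have hrp : (((k + n : ℕ) : ℝ) + 1) ^ β ≤ (2 * ((n:ℝ) + 1)) ^ β :=
        Real.rpow_le_rpow h0 h1 hβ
      have heq : x' * (2 * ((n:ℝ) + 1)) ^ β = x * ((n:ℝ) + 1) ^ β := by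
        rw [Real.mul_rpow (by norm_num) (by positivity)]
        field_simp [hx'def]
        rw [hx'def, div_mul_cancel₀ _ h2β.ne']
      show x' * (((k + n : ℕ) : ℝ) + 1) ^ β < Y (k + n + 1) ω
      calc x' * (((k + n : ℕ) : ℝ) + 1) ^ β ≤ x' * (2 * ((n:ℝ) + 1)) ^ β := by
              exact mul_le_mul_of_nonneg_left hrp hx'.le
        _ = x * ((n:ℝ) + 1) ^ β := heq
        _ < Y (n + 1) ω := hω'
        _ ≤ Y (k + n + 1) ω := hmono' (by omega) ω
    -- coefficient bound
    have hcoef : ∀ k ≤ n, ENNReal.ofReal (cmin * ((n:ℝ)+1) ^ α) * μ T ≤ f (k + n) := by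
      intro k hk
      have hμ : μ T ≤ μ {ω | x' * (((k + n : ℕ) : ℝ) + 1) ^ β < Y (k + n + 1) ω} :=
        measure_mono (hsub k hk)
      have hreal : cmin * ((n:ℝ)+1) ^ α ≤ (((k + n : ℕ) : ℝ) + 1) ^ α := by
        have hkc : (k:ℝ) ≤ n := by exact_mod_cast hk
        have hk0 : (0:ℝ) ≤ k := Nat.cast_nonneg k
        have h1 : ((n:ℝ) + 1) ≤ ((k + n : ℕ) : ℝ) + 1 := by push_cast; linarith
        have h2 : (((k + n : ℕ) : ℝ) + 1) ≤ 2 * ((n:ℝ) + 1) := by push_cast; linarith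
        have hn1 : (0:ℝ) < (n:ℝ) + 1 := by positivity
        rcases le_or_gt 0 α with hα0 | hα0
        · calc cmin * ((n:ℝ)+1) ^ α ≤ 1 * ((n:ℝ)+1) ^ α := by
                exact mul_le_mul_of_nonneg_right (min_le_left _ _) (by positivity)
            _ = ((n:ℝ)+1) ^ α := one_mul _
            _ ≤ (((k + n : ℕ) : ℝ) + 1) ^ α := Real.rpow_le_rpow hn1.le h1 hα0
        · calc cmin * ((n:ℝ)+1) ^ α ≤ (2:ℝ) ^ α * ((n:ℝ)+1) ^ α := by
                exact mul_le_mul_of_nonneg_right (min_le_right _ _) (by positivity)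
            _ = (2 * ((n:ℝ)+1)) ^ α := (Real.mul_rpow (by norm_num) hn1.le).symm
            _ ≤ (((k + n : ℕ) : ℝ) + 1) ^ α := by
                exact Real.rpow_le_rpow_of_nonpos (by positivity) h2 hα0.le
      calc ENNReal.ofReal (cmin * ((n:ℝ)+1) ^ α) * μ T
          ≤ ENNReal.ofReal ((((k + n : ℕ) : ℝ) + 1) ^ α) *
            μ {ω | x' * (((k + n : ℕ) : ℝ) + 1) ^ β < Y (k + n + 1) ω} :=
            mul_le_mul' (ENNReal.ofReal_le_ofReal hreal) hμ
        _ = f (k + n) := by simp [hf]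
    -- sum over the block
    have hblock : (n + 1 : ENNReal) * (ENNReal.ofReal (cmin * ((n:ℝ)+1) ^ α) * μ T)
        ≤ ∑' k, f (k + n) := by
      calc (n + 1 : ENNReal) * (ENNReal.ofReal (cmin * ((n:ℝ)+1) ^ α) * μ T)
          = ∑ k ∈ range (n + 1), ENNReal.ofReal (cmin * ((n:ℝ)+1) ^ α) * μ T := by
            simp [sum_const, card_range, nsmul_eq_mul]
        _ ≤ ∑ k ∈ range (n + 1), f (k + n) := by
            refine Finset.sum_le_sum fun k hk => hcoef k (by simpa using Nat.lt_succ_iff.mp (mem_range.mp hk))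
        _ ≤ ∑' k, f (k + n) := ENNReal.sum_le_tsum _
    refine le_trans ?_ hblock
    -- c ≤ (n+1) * ofReal (cmin * (n+1)^α)
    have hfinal : c ≤ (n + 1 : ENNReal) * ENNReal.ofReal (cmin * ((n:ℝ)+1) ^ α) := by
      have hn1 : (0:ℝ) < (n:ℝ) + 1 := by positivity
      have hcast : (n + 1 : ENNReal) = ENNReal.ofReal ((n:ℝ) + 1) := by
        rw [ENNReal.ofReal_add (by positivity) zero_le_one]
        simp [ENNReal.ofReal_one, ENNReal.ofReal_natCast]
      rw [hcast, ← ENNReal.ofReal_mul hn1.le]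
      apply ENNReal.ofReal_le_ofReal
      have hge1 : (1:ℝ) ≤ ((n:ℝ) + 1) * ((n:ℝ)+1) ^ α := by
        have : ((n:ℝ) + 1) * ((n:ℝ)+1) ^ α = ((n:ℝ)+1) ^ (1 + α) := by
          rw [Real.rpow_add hn1, Real.rpow_one]
        rw [this]
        exact Real.one_le_rpow (by linarith) (by linarith)
      calc cmin = cmin * 1 := (mul_one _).symm
        _ ≤ cmin * (((n:ℝ) + 1) * ((n:ℝ)+1) ^ α) := by
            exact mul_le_mul_of_nonneg_left hge1 hcminpos.le
        _ = ((n:ℝ) + 1) * (cmin * ((n:ℝ)+1) ^ α) := by ring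
    calc c * μ T ≤ ((n + 1 : ENNReal) * ENNReal.ofReal (cmin * ((n:ℝ)+1) ^ α)) * μ T :=
          mul_le_mul' hfinal le_rfl
      _ = (n + 1 : ENNReal) * (ENNReal.ofReal (cmin * ((n:ℝ)+1) ^ α) * μ T) := by ring
  -- tails tend to 0
  have htail : Filter.Tendsto (fun n : ℕ => ∑' k, f (k + n)) Filter.atTop (nhds 0) :=
    ENNReal.tendsto_sum_nat_add f hfsum
  have hsq : Filter.Tendsto (fun n : ℕ => c * μ {ω | x * ((n:ℝ) + 1) ^ β < Y (n + 1) ω})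
      Filter.atTop (nhds 0) := by
    refine tendsto_of_tendsto_of_tendsto_of_le_of_le tendsto_const_nhds htail
      (fun n => zero_le) (fun n => key n)
  have hmul : Filter.Tendsto (fun n : ℕ => c⁻¹ * (c * μ {ω | x * ((n:ℝ) + 1) ^ β < Y (n + 1) ω}))
      Filter.atTop (nhds 0) := by
    have := ENNReal.Tendsto.const_mul hsq (Or.inr (ENNReal.inv_ne_top.mpr hcpos))
    simpa using this
  have hcancel : ∀ n : ℕ, c⁻¹ * (c * μ {ω | x * ((n:ℝ) + 1) ^ β < Y (n + 1) ω})
      = μ {ω | x * ((n:ℝ) + 1) ^ β < Y (n + 1) ω} := by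
    intro n
    rw [← mul_assoc, ENNReal.inv_mul_cancel hcpos (by simp [hc]), one_mul]
  have hshift : Filter.Tendsto (fun n : ℕ => μ {ω | x * (((n + 1 : ℕ)):ℝ) ^ β < Y (n + 1) ω})
      Filter.atTop (nhds 0) := by
    have := hmul
    simp only [hcancel] at this
    convert this using 2 with n
    push_cast
    ring_nf
  exact (Filter.tendsto_add_atTop_iff_nat 1).mp hshift

end
end

section
/- Let {S_n; n ≥ 1} be any sequence of random variables and let r ∈ ℝ, p > 0, q > 0. Then for every ε > 0: ∫_ε^∞ ∑_{n≥1} n^{r−2} P( |S_n| > x^q n^{1/p} ) dx = ∑_{n≥1} n^{r−2−1/(pq)} E( |S_n|^{1/q} − ε n^{1/(pq)} )⁺ (as an identity in [0, ∞]). -/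
open MeasureTheory

noncomputable section

private lemma aux_iff {p q x N s : ℝ} (hp : 0 < p) (hq : 0 < q) (hx : 0 < x) (hN : 0 < N)
    (hs : 0 ≤ s) :
    x ^ q * N ^ (1 / p) < s ↔ x < s ^ (1 / q) * N ^ (-(1 / (p * q))) := by
  have h1 : x < s ^ (1 / q) * N ^ (-(1 / (p * q))) ↔
      x * N ^ (1 / (p * q)) < s ^ (1 / q) := by
    rw [Real.rpow_neg hN.le, ← div_eq_mul_inv,
      lt_div_iff₀ (Real.rpow_pos_of_pos hN _)]
  have h2 : x * N ^ (1 / (p * q)) < s ^ (1 / q) ↔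
      (x * N ^ (1 / (p * q))) ^ q < (s ^ (1 / q)) ^ q :=
    (Real.rpow_lt_rpow_iff (by positivity) (by positivity) hq).symm
  have e1 : (x * N ^ (1 / (p * q))) ^ q = x ^ q * N ^ (1 / p) := by
    rw [Real.mul_rpow hx.le (Real.rpow_pos_of_pos hN _).le, ← Real.rpow_mul hN.le]
    congr 2
    rw [one_div, one_div, mul_inv, mul_assoc, inv_mul_cancel₀ hq.ne', mul_one]
  have e2 : (s ^ (1 / q)) ^ q = s := by
    rw [← Real.rpow_mul hs, one_div_mul_cancel hq.ne', Real.rpow_one]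
  rw [h1, h2, e1, e2]

/-- The identity (1.1) of Remark 1.1, as an identity in `[0, ∞]`:
`∫_ε^∞ ∑_{n≥1} n^(r-2) P(|S_n| > x^q n^(1/p)) dx
  = ∑_{n≥1} n^(r-2-1/(pq)) E(|S_n|^(1/q) - ε n^(1/(pq)))⁺`. -/
theorem stmt_8 {Ω : Type*} [MeasurableSpace Ω] (μ : Measure Ω) [IsProbabilityMeasure μ]
    (S : ℕ → Ω → ℝ) (hS : ∀ n, Measurable (S n))
    (r p q : ℝ) (hp : 0 < p) (hq : 0 < q) (ε : ℝ) (hε : 0 < ε) :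
    ∫⁻ x in Set.Ioi ε, ∑' n : ℕ, ENNReal.ofReal (((n : ℝ) + 1) ^ (r - 2)) *
        μ {ω | x ^ q * ((n : ℝ) + 1) ^ (1 / p) < |S (n + 1) ω|} =
      ∑' n : ℕ, ENNReal.ofReal (((n : ℝ) + 1) ^ (r - 2 - 1 / (p * q))) *
        ∫⁻ ω, ENNReal.ofReal
          (|S (n + 1) ω| ^ (1 / q) - ε * ((n : ℝ) + 1) ^ (1 / (p * q))) ∂μ := by
  -- notation
  set T : ℕ → Ω → ℝ := fun n ω =>
    |S (n + 1) ω| ^ (1 / q) * ((n : ℝ) + 1) ^ (-(1 / (p * q))) with hT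
  have hN : ∀ n : ℕ, (0 : ℝ) < (n : ℝ) + 1 := fun n => by positivity
  have hTmeas : ∀ n, Measurable (T n) := fun n =>
    (((Real.continuous_rpow_const (by positivity)).measurable).comp
      (hS (n + 1)).abs).mul_const _
  -- the set rewriting on `Ioi ε`
  have hset : ∀ n : ℕ, ∀ x ∈ Set.Ioi ε,
      {ω | x ^ q * ((n : ℝ) + 1) ^ (1 / p) < |S (n + 1) ω|} = {ω | x < T n ω} := by
    intro n x hx
    ext ω
    exact aux_iff hp hq (hε.trans hx) (hN n) (abs_nonneg _)
  -- antitone measurability of the tail probability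
  have htail : ∀ n : ℕ, Measurable fun x : ℝ => μ {ω | x < T n ω} := by
    intro n
    apply Antitone.measurable
    intro x y hxy
    exact measure_mono fun ω (h : y < T n ω) => lt_of_le_of_lt hxy h
  -- per-n computation of the integral over `Ioi ε`
  have key : ∀ n : ℕ,
      ∫⁻ x in Set.Ioi ε, μ {ω | x < T n ω} =
        ENNReal.ofReal (((n : ℝ) + 1) ^ (-(1 / (p * q)))) *
          ∫⁻ ω, ENNReal.ofReal
            (|S (n + 1) ω| ^ (1 / q) - ε * ((n : ℝ) + 1) ^ (1 / (p * q))) ∂μ := by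
    intro n
    have hNn := hN n
    -- shift the integral to `Ioi 0`
    have hmp : MeasurePreserving (fun t : ℝ => t + ε)
        (volume.restrict (Set.Ioi (0 : ℝ))) (volume.restrict (Set.Ioi ε)) := by
      have h := (measurePreserving_add_right volume ε).restrict_preimage
        (measurableSet_Ioi (a := ε))
      have hpre : (fun t : ℝ => t + ε) ⁻¹' Set.Ioi ε = Set.Ioi (0 : ℝ) := by
        ext t; simp [lt_add_iff_pos_left]
      rwa [hpre] at h
    have hshift : ∫⁻ x in Set.Ioi ε, μ {ω | x < T n ω} =
        ∫⁻ t in Set.Ioi (0 : ℝ), μ {ω | t + ε < T n ω} :=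
      (hmp.lintegral_comp (htail n)).symm
    -- identify with truncated positive part via the layer cake formula
    have hlayer := lintegral_eq_lintegral_meas_lt μ
      (f := fun ω => max (T n ω - ε) 0)
      (Filter.Eventually.of_forall fun ω => le_max_right _ _)
      (((hTmeas n).sub_const ε).max measurable_const).aemeasurable
    have hsets : ∫⁻ t in Set.Ioi (0 : ℝ), μ {ω | t + ε < T n ω} =
        ∫⁻ t in Set.Ioi (0 : ℝ), μ {ω | t < max (T n ω - ε) 0} := by
      apply setLIntegral_congr_fun measurableSet_Ioi
      intro t ht; beta_reduce
      have ht' : 0 < t := ht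
      congr 1
      ext ω
      simp only [Set.mem_setOf_eq, lt_max_iff]
      constructor
      · intro h; left; linarith
      · rintro (h | h) <;> linarith
    -- positive part rewriting
    have hposint : ∫⁻ ω, ENNReal.ofReal (max (T n ω - ε) 0) ∂μ =
        ENNReal.ofReal (((n : ℝ) + 1) ^ (-(1 / (p * q)))) *
          ∫⁻ ω, ENNReal.ofReal
            (|S (n + 1) ω| ^ (1 / q) - ε * ((n : ℝ) + 1) ^ (1 / (p * q))) ∂μ := by
      rw [← lintegral_const_mul' _ _ ENNReal.ofReal_ne_top]
      congr 1
      ext ω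
      have hinv : ((n : ℝ) + 1) ^ (-(1 / (p * q))) * ((n : ℝ) + 1) ^ (1 / (p * q)) = 1 := by
        rw [← Real.rpow_add hNn]; simp
      have e3 : T n ω - ε = ((n : ℝ) + 1) ^ (-(1 / (p * q))) *
          (|S (n + 1) ω| ^ (1 / q) - ε * ((n : ℝ) + 1) ^ (1 / (p * q))) := by
        rw [hT]
        have := hinv
        nlinarith [hinv]
      have hmax : ENNReal.ofReal (max (T n ω - ε) 0) = ENNReal.ofReal (T n ω - ε) := by
        rcases le_or_gt (T n ω - ε) 0 with h | h
        · rw [max_eq_right h, ENNReal.ofReal_zero, ENNReal.ofReal_eq_zero.2 h]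
        · rw [max_eq_left h.le]
      rw [hmax, e3, ENNReal.ofReal_mul (Real.rpow_nonneg hNn.le _)]
    rw [hshift, hsets, ← hlayer, hposint]
  -- measurability of each term of the series on the restricted measure
  have haem : ∀ n : ℕ, AEMeasurable
      (fun x : ℝ => ENNReal.ofReal (((n : ℝ) + 1) ^ (r - 2)) *
        μ {ω | x ^ q * ((n : ℝ) + 1) ^ (1 / p) < |S (n + 1) ω|})
      (volume.restrict (Set.Ioi ε)) := by
    intro n
    refine AEMeasurable.congr
      (f := fun x : ℝ => ENNReal.ofReal (((n : ℝ) + 1) ^ (r - 2)) * μ {ω | x < T n ω})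
      (((htail n).const_mul _).aemeasurable) ?_
    refine ((ae_restrict_iff' measurableSet_Ioi).2 (Filter.Eventually.of_forall
      fun x hx => ?_))
    simp only
    rw [hset n x hx]
  rw [lintegral_tsum haem]
  refine tsum_congr fun n => ?_
  have hstep : ∫⁻ x in Set.Ioi ε, ENNReal.ofReal (((n : ℝ) + 1) ^ (r - 2)) *
      μ {ω | x ^ q * ((n : ℝ) + 1) ^ (1 / p) < |S (n + 1) ω|} =
      ENNReal.ofReal (((n : ℝ) + 1) ^ (r - 2)) *
        ∫⁻ x in Set.Ioi ε, μ {ω | x < T n ω} := by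
    rw [← lintegral_const_mul' _ _ ENNReal.ofReal_ne_top]
    apply setLIntegral_congr_fun measurableSet_Ioi
    exact fun x hx => by beta_reduce; rw [hset n x hx]
  rw [hstep, key n, ← mul_assoc, ← ENNReal.ofReal_mul (Real.rpow_nonneg (hN n).le _),
    ← Real.rpow_add (hN n)]
  norm_num [sub_eq_add_neg]
end
end

section
/- Let X be a random variable, 0 < p < 2, r > 1 and q > 0. Then ∫_ε^∞ ∑_{n≥1} n^{r−1} P( |X|^{1/q} > x n^{1/(pq)} ) dx < ∞ for all ε > 0 if and only if: E|X|^{1/q} < ∞ if q < 1/(pr); E[|X|^{pr} log⁺|X|] < ∞ if q = 1/(pr); E|X|^{pr} < ∞ if q > 1/(pr). -/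
open MeasureTheory Finset ENNReal

noncomputable section

lemma mvt_rpow {s : ℝ} (m : ℝ) (hm : 1 ≤ m) :
    ∃ ξ, m ≤ ξ ∧ ξ ≤ m + 1 ∧ (m+1) ^ (s+1) - m ^ (s+1) = (s+1) * ξ ^ s := by
  have h0 : ∀ x ∈ Set.Ioo m (m+1), HasDerivAt (fun x : ℝ => x ^ (s+1)) ((s+1) * x ^ s) x := by
    intro x hx
    have hx0 : x ≠ 0 := by have h1 := hx.1; intro h; rw [h] at h1; linarith
    have := Real.hasDerivAt_rpow_const (x := x) (p := s+1) (Or.inl hx0)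
    simpa using this
  have hcont : ContinuousOn (fun x : ℝ => x ^ (s+1)) (Set.Icc m (m+1)) := by
    apply ContinuousOn.rpow_const continuousOn_id
    intro x hx
    refine Or.inl ?_
    have h1 := hx.1; intro h; simp only [id_eq] at h; rw [h] at h1; linarith
  obtain ⟨ξ, hξ, h⟩ := exists_hasDerivAt_eq_slope (fun x : ℝ => x ^ (s+1))
    (fun x => (s+1) * x ^ s) (by linarith : m < m + 1) hcont h0
  refine ⟨ξ, hξ.1.le, hξ.2.le, ?_⟩
  rw [h]
  field_simp
  ring

lemma sum_rpow_le {s : ℝ} (hs : -1 < s) (m : ℕ) :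
    ∑ n ∈ range m, ((n : ℝ) + 1) ^ s ≤ ((2:ℝ) ^ s + 1) / (s + 1) * (m : ℝ) ^ (s + 1) +
      (m : ℝ) ^ (s + 1) := by
  have hs1 : (0:ℝ) < s + 1 := by linarith
  set C : ℝ := ((2:ℝ) ^ s + 1) / (s + 1) + 1 with hC
  have hC1 : 1 ≤ C := by
    have h0 : (0:ℝ) < (2:ℝ) ^ s := Real.rpow_pos_of_pos (by norm_num) s
    have h1 : (0:ℝ) < ((2:ℝ) ^ s + 1) / (s + 1) := by positivity
    rw [hC]; linarith
  have key : ∀ n : ℕ, ∑ k ∈ range n, ((k : ℝ) + 1) ^ s ≤ C * (n : ℝ) ^ (s + 1) := by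
    intro n
    induction n with
    | zero => simp [Real.zero_rpow (by positivity : s + 1 ≠ 0)]
    | succ n ih =>
      rw [Finset.sum_range_succ]
      rcases Nat.eq_zero_or_pos n with h0 | hpos
      · subst h0
        simp only [Nat.cast_zero, Real.zero_rpow (by positivity : s + 1 ≠ 0)]
        push_cast
        simp only [range_zero, Finset.sum_empty, zero_add, Real.one_rpow]
        linarith
      · have hn1 : (1:ℝ) ≤ (n:ℝ) := by exact_mod_cast hpos
        obtain ⟨ξ, hξ1, hξ2, hξ⟩ := mvt_rpow (s := s) (n : ℝ) hn1
        have hξpos : (0:ℝ) < ξ := by linarith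
        have step : ((n:ℝ) + 1) ^ s ≤ C * (((n:ℝ)+1) ^ (s+1) - (n:ℝ) ^ (s+1)) := by
          rw [hξ]
          rcases le_or_gt 0 s with hs0 | hs0
          · have h1 : ((n:ℝ) + 1) ^ s ≤ ((2:ℝ) * n) ^ s := by
              apply Real.rpow_le_rpow (by linarith) (by linarith) hs0
            have h2 : ((2:ℝ) * n) ^ s = 2 ^ s * (n:ℝ) ^ s :=
              Real.mul_rpow (by norm_num) (by linarith)
            have h3 : (n:ℝ) ^ s ≤ ξ ^ s := Real.rpow_le_rpow (by linarith) hξ1 hs0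
            have h4 : (0:ℝ) < (n:ℝ) ^ s := Real.rpow_pos_of_pos (by linarith) s
            have h5 : C * (s+1) ≥ 2 ^ s := by
              rw [hC]
              have : ((2:ℝ) ^ s + 1) / (s + 1) * (s+1) = 2 ^ s + 1 := by field_simp
              nlinarith
            calc ((n:ℝ)+1)^s ≤ 2 ^ s * (n:ℝ)^s := by rw [← h2]; exact h1
            _ ≤ 2 ^ s * ξ ^ s := by nlinarith [Real.rpow_pos_of_pos (show (0:ℝ)<2 by norm_num) s]
            _ ≤ C * (s+1) * ξ ^ s := by nlinarith [Real.rpow_pos_of_pos hξpos s]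
            _ = C * ((s+1) * ξ ^ s) := by ring
          · have h3 : ξ ^ s ≥ ((n:ℝ)+1) ^ s :=
              Real.rpow_le_rpow_of_nonpos hξpos hξ2 hs0.le
            have h5 : C * (s+1) ≥ 1 := by
              rw [hC]
              have : ((2:ℝ) ^ s + 1) / (s + 1) * (s+1) = 2 ^ s + 1 := by field_simp
              nlinarith [Real.rpow_pos_of_pos (show (0:ℝ)<2 by norm_num) s]
            have h4 : (0:ℝ) < ((n:ℝ)+1) ^ s := Real.rpow_pos_of_pos (by linarith) s
            calc ((n:ℝ)+1)^s = 1 * ((n:ℝ)+1)^s := (one_mul _).symm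
            _ ≤ (C * (s+1)) * ξ ^ s := by nlinarith
            _ = C * ((s+1) * ξ ^ s) := by ring
        push_cast
        linarith [ih]
  have := key m
  rw [hC] at this
  linarith

lemma le_sum_rpow {s : ℝ} (hs : -1 < s) (m : ℕ) (hm : 1 ≤ m) :
    (1 - 2 ^ (-(s+1))) / (s + 1) * (m : ℝ) ^ (s + 1) ≤ ∑ n ∈ range m, ((n : ℝ) + 1) ^ s := by
  have hs1 : (0:ℝ) < s + 1 := by linarith
  have hd0 : (2:ℝ) ^ (-(s+1)) < 1 := by
    apply Real.rpow_lt_one_of_one_lt_of_neg (by norm_num) (by linarith)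
  have hd0' : (0:ℝ) < (2:ℝ) ^ (-(s+1)) := Real.rpow_pos_of_pos (by norm_num) _
  set d : ℝ := 1 - 2 ^ (-(s+1)) with hdd
  have hd1 : d ≤ 1 := by rw [hdd]; linarith
  have hdpos : 0 < d := by rw [hdd]; linarith
  induction m, hm using Nat.le_induction with
  | base =>
    simp only [Nat.cast_one, Real.one_rpow, range_one, Finset.sum_singleton, Nat.cast_zero,
      zero_add, mul_one]
    -- d / (s+1) ≤ 1
    rcases le_or_gt 0 s with hs0 | hs0
    · rw [div_le_one hs1]; linarith
    · rw [div_le_one hs1, hdd]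
      -- 1 - 2^(-(s+1)) ≤ s + 1  i.e.  1 - (s+1) ≤ 2^(-(s+1))
      have h2 : (2:ℝ) ^ (-(s+1)) = Real.exp (Real.log 2 * (-(s+1))) := by
        rw [Real.rpow_def_of_pos (by norm_num)]
      have h3 : 1 + Real.log 2 * (-(s+1)) ≤ (2:ℝ) ^ (-(s+1)) := by
        rw [h2]
        have := Real.add_one_le_exp (Real.log 2 * (-(s+1)))
        linarith
      have hlog2 : Real.log 2 ≤ 1 := by
        have := Real.log_le_sub_one_of_pos (show (0:ℝ) < 2 by norm_num)
        linarith
      nlinarith [Real.log_nonneg (show (1:ℝ) ≤ 2 by norm_num)]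
  | succ n hn ih =>
    rw [Finset.sum_range_succ]
    have hn1 : (1:ℝ) ≤ (n:ℝ) := by exact_mod_cast hn
    obtain ⟨ξ, hξ1, hξ2, hξ⟩ := mvt_rpow (s := s) (n : ℝ) hn1
    have hξpos : (0:ℝ) < ξ := by linarith
    have step : d / (s+1) * (((n:ℝ)+1) ^ (s+1) - (n:ℝ) ^ (s+1)) ≤ ((n:ℝ)+1) ^ s := by
      rw [hξ]
      have heq : d / (s+1) * ((s+1) * ξ ^ s) = d * ξ ^ s := by field_simp
      rw [heq]
      rcases le_or_gt 0 s with hs0 | hs0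
      · have h3 : ξ ^ s ≤ ((n:ℝ)+1) ^ s := Real.rpow_le_rpow (by linarith) hξ2 hs0
        have h4 : (0:ℝ) < ξ ^ s := Real.rpow_pos_of_pos hξpos s
        nlinarith
      · have h3 : ξ ^ s ≤ (n:ℝ) ^ s :=
          Real.rpow_le_rpow_of_nonpos (by linarith) hξ1 hs0.le
        have h4 : (2:ℝ) ^ s * (n:ℝ) ^ s ≤ ((n:ℝ)+1) ^ s := by
          rw [← Real.mul_rpow (by norm_num) (by linarith)]
          exact Real.rpow_le_rpow_of_nonpos (by linarith) (by linarith) hs0.le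
        -- d * ξ^s ≤ d * n^s ≤ d * 2^(-s) * (n+1)^s ≤ (n+1)^s  since d * 2^(-s) ≤ 1
        have h5 : d * (2:ℝ) ^ (-s) ≤ 1 := by
          set u : ℝ := (2:ℝ) ^ (-s) with hu
          have hu1 : 1 < u := Real.one_lt_rpow_iff_of_pos (by norm_num) |>.2 (by norm_num; linarith)
          have hu2 : u < 2 := by
            calc u < 2 ^ (1:ℝ) := by
                  apply Real.rpow_lt_rpow_of_exponent_lt (by norm_num) (by linarith)
            _ = 2 := by norm_num
          have huu : (2:ℝ) ^ (-(s+1)) = u / 2 := by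
            rw [hu, ← Real.rpow_sub_one (by norm_num)]
            ring_nf
          rw [hdd, huu]
          nlinarith
        have h6 : (n:ℝ) ^ s ≤ (2:ℝ)^(-s) * ((n:ℝ)+1) ^ s := by
          have h2s : (0:ℝ) < (2:ℝ)^(-s) := Real.rpow_pos_of_pos (by norm_num) _
          have h2s' : (2:ℝ)^(-s) * (2:ℝ)^s = 1 := by
            rw [← Real.rpow_add (by norm_num)]; norm_num
          nlinarith [Real.rpow_pos_of_pos (show (0:ℝ)<2 by norm_num) s,
            Real.rpow_pos_of_pos (show (0:ℝ)<(n:ℝ) by linarith) s]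
        have h7 : (0:ℝ) < ((n:ℝ)+1) ^ s := Real.rpow_pos_of_pos (by linarith) s
        have h2s : (0:ℝ) < (2:ℝ)^(-s) := Real.rpow_pos_of_pos (by norm_num) _
        nlinarith
    push_cast
    push_cast at ih step
    nlinarith

lemma reduce_one {Ω : Type*} [MeasurableSpace Ω] (μ : Measure Ω) [IsProbabilityMeasure μ]
    (Y : Ω → ℝ) (hY : Measurable Y) (c : ℝ) (hc : 0 < c) (ε : ℝ) :
    ∫⁻ x in Set.Ioi ε, μ {ω | x * c < Y ω} = ∫⁻ ω, ENNReal.ofReal (Y ω / c - ε) ∂μ := by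
  have hS : MeasurableSet {p : ℝ × Ω | p.1 * c < Y p.2} :=
    measurableSet_lt (measurable_fst.mul_const c) (hY.comp measurable_snd)
  have h1 : ∀ x : ℝ, μ {ω | x * c < Y ω}
      = ∫⁻ ω, {p : ℝ × Ω | p.1 * c < Y p.2}.indicator (fun _ => 1) (x, ω) ∂μ := by
    intro x
    have hmx : MeasurableSet {ω | x * c < Y ω} := measurableSet_lt measurable_const hY
    rw [← lintegral_indicator_one hmx]
    congr 1
  calc ∫⁻ x in Set.Ioi ε, μ {ω | x * c < Y ω}
      = ∫⁻ x in Set.Ioi ε, ∫⁻ ω, {p : ℝ × Ω | p.1 * c < Y p.2}.indicator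
          (fun _ => 1) (x, ω) ∂μ := by
        refine setLIntegral_congr_fun measurableSet_Ioi ?_
        exact fun x _ => h1 x
    _ = ∫⁻ ω, ∫⁻ x in Set.Ioi ε, {p : ℝ × Ω | p.1 * c < Y p.2}.indicator
          (fun _ => 1) (x, ω) ∂volume ∂μ := by
        apply lintegral_lintegral_swap
        exact ((measurable_indicator_const_iff 1).mpr hS).aemeasurable
    _ = ∫⁻ ω, ENNReal.ofReal (Y ω / c - ε) ∂μ := by
        refine lintegral_congr fun ω => ?_
        have : (fun x : ℝ => {p : ℝ × Ω | p.1 * c < Y p.2}.indicator (fun _ => 1) (x, ω))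
            = (Set.Iio (Y ω / c)).indicator (fun _ => (1 : ENNReal)) := by
          ext x
          have : x * c < Y ω ↔ x < Y ω / c := lt_div_iff₀ hc |>.symm
          by_cases h : x < Y ω / c <;>
            simp [Set.indicator_apply, Set.mem_setOf_eq, this, h]
        rw [this, lintegral_indicator measurableSet_Iio, setLIntegral_one,
          Measure.restrict_apply measurableSet_Iio]
        rw [show Set.Iio (Y ω / c) ∩ Set.Ioi ε = Set.Ioo ε (Y ω / c) by
          ext x; simp [Set.mem_Ioo, and_comm]]
        rw [Real.volume_Ioo]

lemma reduce_all {Ω : Type*} [MeasurableSpace Ω] (μ : Measure Ω) [IsProbabilityMeasure μ]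
    (Y : Ω → ℝ) (hY : Measurable Y) (w c : ℕ → ℝ) (hc : ∀ n, 0 < c n) (ε : ℝ) :
    ∫⁻ x in Set.Ioi ε, ∑' n : ℕ, ENNReal.ofReal (w n) * μ {ω | x * c n < Y ω}
      = ∫⁻ ω, ∑' n : ℕ, ENNReal.ofReal (w n) * ENNReal.ofReal (Y ω / c n - ε) ∂μ := by
  have hmono : ∀ n, Measurable fun x : ℝ => μ {ω | x * c n < Y ω} := by
    intro n
    apply Antitone.measurable
    intro x₁ x₂ hx
    apply measure_mono
    intro ω hω
    exact lt_of_le_of_lt (mul_le_mul_of_nonneg_right hx (hc n).le) hω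
  rw [lintegral_tsum fun n => ((hmono n).const_mul _).aemeasurable]
  have h2 : ∀ n, ∫⁻ x in Set.Ioi ε, ENNReal.ofReal (w n) * μ {ω | x * c n < Y ω}
      = ENNReal.ofReal (w n) * ∫⁻ ω, ENNReal.ofReal (Y ω / c n - ε) ∂μ := by
    intro n
    rw [lintegral_const_mul _ (hmono n), reduce_one μ Y hY (c n) (hc n) ε]
  simp_rw [h2]
  have := lintegral_tsum (μ := μ)
    (f := fun (n : ℕ) ω => ENNReal.ofReal (w n) * ENNReal.ofReal (Y ω / c n - ε))
    (fun n => (((hY.div_const _).sub_const _).ennreal_ofReal.const_mul _).aemeasurable)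
  simp_rw [lintegral_const_mul _ (((hY.div_const _).sub_const _).ennreal_ofReal)] at this
  exact this.symm

def Tf (α r ε y : ℝ) : ℝ≥0∞ :=
  ∑' n : ℕ, ENNReal.ofReal (((n:ℝ)+1) ^ (r-1)) * ENNReal.ofReal (y / ((n:ℝ)+1) ^ α - ε)

lemma one_le_np1_rpow {α : ℝ} (hα : 0 ≤ α) (n : ℕ) : (1:ℝ) ≤ ((n:ℝ)+1) ^ α :=
  Real.one_le_rpow (by push_cast; linarith [Nat.cast_nonneg (α := ℝ) n]) hα

lemma Tf_eq_zero {α r ε y : ℝ} (hα : 0 < α) (hε : 0 < ε) (hy : y ≤ ε) :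
    Tf α r ε y = 0 := by
  unfold Tf
  convert tsum_zero with n
  have h1 : (1:ℝ) ≤ ((n:ℝ)+1) ^ α := one_le_np1_rpow hα.le n
  have : y / ((n:ℝ)+1) ^ α ≤ ε := by
    rcases le_or_gt y 0 with h | h
    · have : y / ((n:ℝ)+1) ^ α ≤ 0 := div_nonpos_of_nonpos_of_nonneg h (by linarith)
      linarith
    · calc y / ((n:ℝ)+1) ^ α ≤ y / 1 := by
            apply div_le_div_of_nonneg_left h.le one_pos h1
      _ = y := div_one y
      _ ≤ ε := hy
  rw [mul_eq_zero]
  right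
  rw [ENNReal.ofReal_eq_zero]
  linarith

lemma Tf_eq_sum {α r ε : ℝ} (hα : 0 < α) (hε : 0 < ε) (y : ℝ) :
    Tf α r ε y = ∑ n ∈ range ⌊(y/ε) ^ (1/α)⌋₊,
      ENNReal.ofReal (((n:ℝ)+1) ^ (r-1)) * ENNReal.ofReal (y / ((n:ℝ)+1) ^ α - ε) := by
  apply tsum_eq_sum
  intro n hn
  rw [Finset.mem_range, not_lt] at hn
  rw [mul_eq_zero]
  right
  rw [ENNReal.ofReal_eq_zero, sub_nonpos]
  by_contra h
  push_neg at h
  have h1 : (1:ℝ) ≤ ((n:ℝ)+1) ^ α := one_le_np1_rpow hα.le n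
  have hpow : ((n:ℝ)+1) ^ α < y / ε := by
    rw [lt_div_iff₀ hε]
    rw [lt_div_iff₀ (by linarith : (0:ℝ) < ((n:ℝ)+1) ^ α)] at h
    linarith [h]
  have hn1 : ((n:ℝ)+1) < (y/ε) ^ (1/α) := by
    have := Real.rpow_lt_rpow (by positivity) hpow (by positivity : (0:ℝ) < 1/α)
    rwa [← Real.rpow_mul (by push_cast; positivity) α (1/α),
      mul_one_div_cancel hα.ne', Real.rpow_one] at this
  have : n + 1 ≤ ⌊(y/ε) ^ (1/α)⌋₊ := Nat.le_floor (by push_cast; linarith)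
  omega

lemma summable_np1 {e : ℝ} (he : e < -1) : Summable fun n : ℕ => ((n:ℝ)+1) ^ e := by
  have h := Real.summable_nat_rpow (p := e) |>.2 he
  have h2 := (summable_nat_add_iff 1).2 h
  refine h2.congr fun n => ?_
  push_cast
  ring_nf

lemma Tf_le_linear {α r ε : ℝ} (hα : 0 < α) (hr : r < α) (hε : 0 < ε) :
    ∃ S : ℝ≥0∞, S ≠ ⊤ ∧ ∀ y : ℝ, Tf α r ε y ≤ S * ENNReal.ofReal y := by
  refine ⟨∑' n : ℕ, ENNReal.ofReal (((n:ℝ)+1) ^ (r-1-α)), ?_, ?_⟩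
  · rw [← ENNReal.ofReal_tsum_of_nonneg (fun n => Real.rpow_nonneg (by positivity) _)
      (summable_np1 (by linarith))]
    exact ENNReal.ofReal_ne_top
  · intro y
    rw [← ENNReal.tsum_mul_right]
    apply ENNReal.tsum_le_tsum
    intro n
    have hpos : (0:ℝ) < (n:ℝ)+1 := by positivity
    have h1 : y / ((n:ℝ)+1) ^ α - ε ≤ ((n:ℝ)+1) ^ (-α) * y := by
      rw [Real.rpow_neg hpos.le]
      rw [div_eq_inv_mul]
      linarith
    calc ENNReal.ofReal (((n:ℝ)+1) ^ (r-1)) * ENNReal.ofReal (y / ((n:ℝ)+1) ^ α - ε)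
        ≤ ENNReal.ofReal (((n:ℝ)+1) ^ (r-1)) * ENNReal.ofReal (((n:ℝ)+1) ^ (-α) * y) :=
          mul_le_mul_right (ENNReal.ofReal_le_ofReal h1) _
      _ = ENNReal.ofReal (((n:ℝ)+1) ^ (r-1)) * (ENNReal.ofReal (((n:ℝ)+1) ^ (-α)) *
            ENNReal.ofReal y) := by
          rw [ENNReal.ofReal_mul (Real.rpow_nonneg hpos.le _)]
      _ = ENNReal.ofReal (((n:ℝ)+1) ^ (r-1-α)) * ENNReal.ofReal y := by
          rw [← mul_assoc, ← ENNReal.ofReal_mul (Real.rpow_nonneg hpos.le _),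
            ← Real.rpow_add hpos]
          ring_nf
      _ ≤ ENNReal.ofReal (((n:ℝ)+1) ^ (r-1-α)) * ENNReal.ofReal y := le_rfl

lemma Tf_lower0 {α r ε : ℝ} (y : ℝ) : ENNReal.ofReal (y - ε) ≤ Tf α r ε y := by
  have h := ENNReal.le_tsum (f := fun n : ℕ =>
    ENNReal.ofReal (((n:ℝ)+1) ^ (r-1)) * ENNReal.ofReal (y / ((n:ℝ)+1) ^ α - ε)) 0
  simpa [Tf, Real.one_rpow] using h

lemma half_le_floor {M : ℝ} (hM : 1 ≤ M) : M / 2 ≤ (⌊M⌋₊ : ℝ) := by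
  rcases le_or_gt 2 M with h | h
  · have := Nat.sub_one_lt_floor M
    linarith
  · have : (1:ℕ) ≤ ⌊M⌋₊ := Nat.le_floor (by exact_mod_cast hM)
    have : (1:ℝ) ≤ (⌊M⌋₊ : ℝ) := by exact_mod_cast this
    linarith

-- generic termwise upper bound

lemma term_le {α r ε : ℝ} (hε : 0 < ε) (y : ℝ) (hy : 0 ≤ y) (n : ℕ) :
    ENNReal.ofReal (((n:ℝ)+1) ^ (r-1)) * ENNReal.ofReal (y / ((n:ℝ)+1) ^ α - ε)
      ≤ ENNReal.ofReal (y * ((n:ℝ)+1) ^ (r-1-α)) := by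
  have hpos : (0:ℝ) < (n:ℝ)+1 := by positivity
  rw [ENNReal.ofReal_mul (by positivity), mul_comm (ENNReal.ofReal y)]
  rw [show r - 1 - α = (r-1) + (-α) by ring, Real.rpow_add hpos,
    ENNReal.ofReal_mul (Real.rpow_nonneg hpos.le _), mul_assoc]
  apply mul_le_mul_right
  rw [← ENNReal.ofReal_mul (Real.rpow_nonneg hpos.le _)]
  apply ENNReal.ofReal_le_ofReal
  rw [Real.rpow_neg hpos.le, div_eq_mul_inv, mul_comm]
  have : (0:ℝ) ≤ (((n:ℝ)+1) ^ α)⁻¹ * y := by positivity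
  linarith

lemma Tf_le_rpow {α r ε : ℝ} (hα : 0 < α) (hαr : α < r) (hε : 0 < ε) :
    ∃ A : ℝ, 0 ≤ A ∧ ∀ y : ℝ, 0 ≤ y →
      Tf α r ε y ≤ ENNReal.ofReal A * ENNReal.ofReal (y ^ (r/α)) := by
  set s : ℝ := r - 1 - α with hsdef
  have hs : -1 < s := by rw [hsdef]; linarith
  have hs1 : (0:ℝ) < s + 1 := by linarith
  set Cs : ℝ := ((2:ℝ) ^ s + 1) / (s + 1) + 1 with hCs
  have hCs0 : 0 ≤ Cs := by
    have : (0:ℝ) < (2:ℝ) ^ s := Real.rpow_pos_of_pos (by norm_num) _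
    rw [hCs]; positivity
  refine ⟨Cs * ε ^ (-((r-α)/α)), mul_nonneg hCs0 (Real.rpow_nonneg hε.le _), fun y hy => ?_⟩
  rcases le_or_gt y ε with hyε | hyε
  · rw [Tf_eq_zero hα hε hyε]; exact zero_le
  · set N : ℝ := (y/ε) ^ (1/α) with hN
    set m : ℕ := ⌊N⌋₊ with hm
    have hyε0 : (0:ℝ) < y / ε := div_pos (lt_trans hε hyε) hε
    have hN0 : 0 ≤ N := by rw [hN]; positivity
    rw [Tf_eq_sum hα hε]
    calc ∑ n ∈ range ⌊(y/ε) ^ (1/α)⌋₊,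
          ENNReal.ofReal (((n:ℝ)+1) ^ (r-1)) * ENNReal.ofReal (y / ((n:ℝ)+1) ^ α - ε)
        ≤ ∑ n ∈ range m, ENNReal.ofReal (y * ((n:ℝ)+1) ^ s) :=
          Finset.sum_le_sum fun n _ => term_le hε y hy n
      _ = ENNReal.ofReal (∑ n ∈ range m, y * ((n:ℝ)+1) ^ s) :=
          (ENNReal.ofReal_sum_of_nonneg fun n _ => by positivity).symm
      _ ≤ ENNReal.ofReal (Cs * ε ^ (-((r-α)/α)) * y ^ (r/α)) := by
          apply ENNReal.ofReal_le_ofReal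
          rw [← Finset.mul_sum]
          have hsum := sum_rpow_le hs m
          have hmN : (m : ℝ) ≤ N := Nat.floor_le hN0
          have hNpow : (m:ℝ) ^ (s+1) ≤ N ^ (s+1) :=
            Real.rpow_le_rpow (by positivity) hmN hs1.le
          have hNval : N ^ (s+1) = y ^ ((r-α)/α) * ε ^ (-((r-α)/α)) := by
            rw [hN, ← Real.rpow_mul hyε0.le]
            have : 1/α * (s+1) = (r-α)/α := by rw [hsdef]; field_simp; ring
            rw [this, Real.div_rpow hy hε.le, Real.rpow_neg hε.le, div_eq_mul_inv]
          have hy0 : (0:ℝ) < y := lt_trans hε hyε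
          have hchain : ∑ n ∈ range m, ((n:ℝ)+1) ^ s ≤ Cs * N ^ (s+1) := by
            calc ∑ n ∈ range m, ((n:ℝ)+1) ^ s
                ≤ ((2:ℝ) ^ s + 1) / (s + 1) * (m : ℝ) ^ (s + 1) + (m : ℝ) ^ (s + 1) := hsum
              _ = Cs * (m:ℝ) ^ (s+1) := by rw [hCs]; ring
              _ ≤ Cs * N ^ (s+1) := by nlinarith [Real.rpow_nonneg (Nat.cast_nonneg (α := ℝ) m) (s+1)]
          calc y * ∑ n ∈ range m, ((n:ℝ)+1) ^ s
              ≤ y * (Cs * N ^ (s+1)) := by nlinarith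
            _ = Cs * ε ^ (-((r-α)/α)) * (y ^ ((r-α)/α) * y) := by rw [hNval]; ring
            _ = Cs * ε ^ (-((r-α)/α)) * y ^ (r/α) := by
                rw [← Real.rpow_add_one hy0.ne', show (r-α)/α + 1 = r/α by field_simp; ring]
      _ = ENNReal.ofReal (Cs * ε ^ (-((r-α)/α))) * ENNReal.ofReal (y ^ (r/α)) := by
          rw [ENNReal.ofReal_mul (by positivity)]

lemma rpow_le_Tf {α r ε : ℝ} (hα : 0 < α) (hαr : α < r) (hε : 0 < ε) :
    ∃ A B : ℝ, 0 ≤ A ∧ 0 ≤ B ∧ ∀ y : ℝ, 0 ≤ y →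
      ENNReal.ofReal (y ^ (r/α)) ≤ ENNReal.ofReal A * Tf α r ε y + ENNReal.ofReal B := by
  set s : ℝ := r - 1 - α with hsdef
  have hs : -1 < s := by rw [hsdef]; linarith
  have hs1 : (0:ℝ) < s + 1 := by linarith
  set cs : ℝ := (1 - 2 ^ (-(s+1))) / (s + 1) with hcs
  have hcs0 : 0 < cs := by
    have h1 : (2:ℝ) ^ (-(s+1)) < 1 :=
      Real.rpow_lt_one_of_one_lt_of_neg (by norm_num) (by linarith)
    rw [hcs]; exact div_pos (by linarith) hs1
  set c : ℝ := cs / 2 * ((2:ℝ) ^ (s+1))⁻¹ * (2*ε) ^ (-((r-α)/α)) with hc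
  have h2s1 : (0:ℝ) < (2:ℝ) ^ (s+1) := Real.rpow_pos_of_pos (by norm_num) _
  have hc0 : 0 < c := by
    have : (0:ℝ) < (2*ε) ^ (-((r-α)/α)) := Real.rpow_pos_of_pos (by linarith) _
    rw [hc]; positivity
  refine ⟨c⁻¹, (2*ε) ^ (r/α), inv_nonneg.mpr hc0.le, Real.rpow_nonneg (by linarith) _,
    fun y hy => ?_⟩
  rcases le_or_gt y (2*ε) with hy2 | hy2
  · have : y ^ (r/α) ≤ (2*ε) ^ (r/α) :=
      Real.rpow_le_rpow hy hy2 (div_nonneg (by linarith) hα.le)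
    calc ENNReal.ofReal (y ^ (r/α)) ≤ ENNReal.ofReal ((2*ε) ^ (r/α)) :=
          ENNReal.ofReal_le_ofReal this
      _ ≤ _ := le_add_self
  · -- main case
    have hy0 : (0:ℝ) < y := by linarith
    set M : ℝ := (y/(2*ε)) ^ (1/α) with hM
    have hM1 : 1 ≤ M := by
      rw [hM]
      apply Real.one_le_rpow (by rw [le_div_iff₀ (by linarith)]; linarith)
        (le_of_lt (one_div_pos.mpr hα))
    set m : ℕ := ⌊M⌋₊ with hm
    have hm1 : 1 ≤ m := Nat.le_floor (by exact_mod_cast hM1)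
    have hmM : (m:ℝ) ≤ M := Nat.floor_le (by linarith)
    have hMα : M ^ α = y / (2*ε) := by
      rw [hM, ← Real.rpow_mul (div_nonneg hy0.le (by linarith))]
      rw [show 1/α * α = 1 by field_simp, Real.rpow_one]
    -- key: Tf ≥ ofReal (c * y^(r/α))
    have key : ENNReal.ofReal (c * y ^ (r/α)) ≤ Tf α r ε y := by
      have hterm : ∀ n ∈ range m, ENNReal.ofReal (y/2 * ((n:ℝ)+1) ^ s)
          ≤ ENNReal.ofReal (((n:ℝ)+1) ^ (r-1)) * ENNReal.ofReal (y / ((n:ℝ)+1) ^ α - ε) := by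
        intro n hn
        rw [Finset.mem_range] at hn
        have hpos : (0:ℝ) < (n:ℝ)+1 := by positivity
        have hpow : ((n:ℝ)+1) ^ α ≤ y / (2*ε) := by
          rw [← hMα]
          apply Real.rpow_le_rpow hpos.le _ hα.le
          have : ((n:ℝ)+1) ≤ (m:ℝ) := by exact_mod_cast hn
          linarith
        have hppos : (0:ℝ) < ((n:ℝ)+1) ^ α := Real.rpow_pos_of_pos hpos _
        have hεle : ε ≤ y / (2 * ((n:ℝ)+1) ^ α) := by
          rw [le_div_iff₀ (by positivity)]
          rw [le_div_iff₀ (by positivity)] at hpow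
          nlinarith
        have h2 : y/2 * ((n:ℝ)+1) ^ s ≤ ((n:ℝ)+1) ^ (r-1) * (y / ((n:ℝ)+1) ^ α - ε) := by
          have hexp : ((n:ℝ)+1) ^ (r-1) = ((n:ℝ)+1) ^ s * ((n:ℝ)+1) ^ α := by
            rw [← Real.rpow_add hpos, hsdef]; ring_nf
          have hspos : (0:ℝ) < ((n:ℝ)+1) ^ s := Real.rpow_pos_of_pos hpos _
          have h3 : y / ((n:ℝ)+1) ^ α - ε ≥ y / (2*((n:ℝ)+1) ^ α) := by
            have : y / ((n:ℝ)+1) ^ α - y / (2*((n:ℝ)+1) ^ α) = y / (2*((n:ℝ)+1) ^ α) := by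
              field_simp; ring
            linarith
          calc y/2 * ((n:ℝ)+1) ^ s = ((n:ℝ)+1) ^ s * ((n:ℝ)+1) ^ α * (y / (2*((n:ℝ)+1) ^ α)) := by
                field_simp
            _ ≤ ((n:ℝ)+1) ^ s * ((n:ℝ)+1) ^ α * (y / ((n:ℝ)+1) ^ α - ε) := by
                apply mul_le_mul_of_nonneg_left h3 (by positivity)
            _ = ((n:ℝ)+1) ^ (r-1) * (y / ((n:ℝ)+1) ^ α - ε) := by rw [hexp]
        calc ENNReal.ofReal (y/2 * ((n:ℝ)+1) ^ s)
            ≤ ENNReal.ofReal (((n:ℝ)+1) ^ (r-1) * (y / ((n:ℝ)+1) ^ α - ε)) :=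
              ENNReal.ofReal_le_ofReal h2
          _ = _ := ENNReal.ofReal_mul (Real.rpow_nonneg hpos.le _)
      calc ENNReal.ofReal (c * y ^ (r/α))
          ≤ ENNReal.ofReal (y/2 * (cs * (m:ℝ) ^ (s+1))) := by
            apply ENNReal.ofReal_le_ofReal
            have hfl : M/2 ≤ (m:ℝ) := half_le_floor hM1
            have hMp : (0:ℝ) < M := by linarith
            have h4 : (M/2) ^ (s+1) ≤ (m:ℝ) ^ (s+1) :=
              Real.rpow_le_rpow (by positivity) hfl hs1.le
            have h5 : (M/2) ^ (s+1) = M ^ (s+1) * ((2:ℝ) ^ (s+1))⁻¹ := by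
              rw [div_eq_mul_inv, Real.mul_rpow hMp.le (by norm_num),
                Real.inv_rpow (by norm_num)]
            have h6 : M ^ (s+1) = y ^ ((r-α)/α) * (2*ε) ^ (-((r-α)/α)) := by
              rw [hM, ← Real.rpow_mul (div_nonneg hy0.le (by linarith))]
              rw [show 1/α * (s+1) = (r-α)/α by rw [hsdef]; field_simp; ring]
              rw [Real.div_rpow hy (by linarith), Real.rpow_neg (by linarith), div_eq_mul_inv]
            have h7 : y ^ ((r-α)/α) * y = y ^ (r/α) := by
              rw [← Real.rpow_add_one hy0.ne', show (r-α)/α + 1 = r/α by field_simp; ring]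
            have hMs : (0:ℝ) ≤ M ^ (s+1) := Real.rpow_nonneg (by linarith) _
            calc c * y ^ (r/α) = cs / 2 * ((2:ℝ) ^ (s+1))⁻¹ * (2*ε) ^ (-((r-α)/α)) *
                  (y ^ ((r-α)/α) * y) := by rw [hc, h7]
              _ = y/2 * (cs * (M ^ (s+1) * ((2:ℝ) ^ (s+1))⁻¹)) := by rw [h6]; ring
              _ = y/2 * (cs * (M/2) ^ (s+1)) := by rw [h5]
              _ ≤ y/2 * (cs * (m:ℝ) ^ (s+1)) :=
                  mul_le_mul_of_nonneg_left (mul_le_mul_of_nonneg_left h4 hcs0.le)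
                    (by linarith)
        _ ≤ ENNReal.ofReal (∑ n ∈ range m, y/2 * ((n:ℝ)+1) ^ s) := by
            apply ENNReal.ofReal_le_ofReal
            rw [← Finset.mul_sum]
            exact mul_le_mul_of_nonneg_left (le_sum_rpow hs m hm1) (by linarith)
        _ ≤ ∑ n ∈ range m, ENNReal.ofReal (y/2 * ((n:ℝ)+1) ^ s) := by
            rw [ENNReal.ofReal_sum_of_nonneg fun n _ => by positivity]
        _ ≤ ∑ n ∈ range m,
              ENNReal.ofReal (((n:ℝ)+1) ^ (r-1)) * ENNReal.ofReal (y / ((n:ℝ)+1) ^ α - ε) :=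
            Finset.sum_le_sum hterm
        _ ≤ Tf α r ε y := ENNReal.sum_le_tsum _
    calc ENNReal.ofReal (y ^ (r/α)) = ENNReal.ofReal (c⁻¹ * (c * y ^ (r/α))) := by
          rw [← mul_assoc, inv_mul_cancel₀ hc0.ne', one_mul]
      _ = ENNReal.ofReal c⁻¹ * ENNReal.ofReal (c * y ^ (r/α)) :=
          ENNReal.ofReal_mul (by positivity)
      _ ≤ ENNReal.ofReal c⁻¹ * Tf α r ε y := mul_le_mul_right key _
      _ ≤ _ := le_add_right le_rfl

lemma harmonic_cast (m : ℕ) : (harmonic m : ℝ) = ∑ n ∈ range m, ((n:ℝ)+1)⁻¹ := by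
  simp only [harmonic, Rat.cast_sum, Rat.cast_inv, Rat.cast_natCast]
  push_cast
  rfl

lemma one_le_logmax {y q : ℝ} : 1 ≤ Real.log (max (y^q) (Real.exp 1)) := by
  calc (1:ℝ) = Real.log (Real.exp 1) := (Real.log_exp 1).symm
    _ ≤ _ := Real.log_le_log (Real.exp_pos 1) (le_max_right _ _)

lemma caseB_upper {r ε q : ℝ} (hr : 1 < r) (hε : 0 < ε) (hq : 0 < q) :
    ∃ A : ℝ, 0 ≤ A ∧ ∀ y : ℝ, 0 ≤ y →
      Tf r r ε y ≤ ENNReal.ofReal A *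
        ENNReal.ofReal (y * Real.log (max (y^q) (Real.exp 1))) := by
  set D : ℝ := max 0 (-Real.log ε) with hD
  have hD0 : 0 ≤ D := le_max_left _ _
  have hDe : -Real.log ε ≤ D := le_max_right _ _
  refine ⟨1 + 1/(r*q) + D, by positivity, fun y hy => ?_⟩
  rcases le_or_gt y ε with hyε | hyε
  · rw [Tf_eq_zero (by linarith) hε hyε]; exact zero_le
  · have hy0 : (0:ℝ) < y := lt_trans hε hyε
    set L : ℝ := Real.log (max (y^q) (Real.exp 1)) with hL
    have hL1 : 1 ≤ L := one_le_logmax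
    have hLy : q * Real.log y ≤ L := by
      rw [← Real.log_rpow hy0]
      exact Real.log_le_log (Real.rpow_pos_of_pos hy0 q) (le_max_left _ _)
    set N : ℝ := (y/ε) ^ (1/r) with hN
    have hN1 : 1 < N := by
      rw [hN]
      exact Real.one_lt_rpow_iff_of_pos (div_pos hy0 hε) |>.2
        (Or.inl ⟨(one_lt_div hε).2 hyε, by positivity⟩)
    set m : ℕ := ⌊N⌋₊ with hm
    have hm1 : 1 ≤ m := Nat.le_floor (by exact_mod_cast hN1.le)
    have hmN : (m:ℝ) ≤ N := Nat.floor_le (by linarith)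
    have hm0 : (0:ℝ) < (m:ℝ) := by exact_mod_cast hm1
    rw [Tf_eq_sum (by linarith : (0:ℝ) < r) hε]
    calc ∑ n ∈ range ⌊(y/ε) ^ (1/r)⌋₊,
          ENNReal.ofReal (((n:ℝ)+1) ^ (r-1)) * ENNReal.ofReal (y / ((n:ℝ)+1) ^ r - ε)
        ≤ ∑ n ∈ range m, ENNReal.ofReal (y * ((n:ℝ)+1)⁻¹) := by
          apply Finset.sum_le_sum
          intro n _
          have := term_le (α := r) (r := r) hε y hy n
          rwa [show r - 1 - r = (-1 : ℝ) by ring, Real.rpow_neg_one] at this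
      _ = ENNReal.ofReal (y * (harmonic m : ℝ)) := by
          rw [← ENNReal.ofReal_sum_of_nonneg fun n _ => by positivity, ← Finset.mul_sum,
            harmonic_cast]
      _ ≤ ENNReal.ofReal ((1 + 1/(r*q) + D) * (y * L)) := by
          apply ENNReal.ofReal_le_ofReal
          have h1 : (harmonic m : ℝ) ≤ 1 + Real.log m := harmonic_le_one_add_log m
          have h2 : Real.log m ≤ Real.log N := Real.log_le_log hm0 hmN
          have h3 : Real.log N = 1/r * (Real.log y - Real.log ε) := by
            rw [hN, Real.log_rpow (div_pos hy0 hε), Real.log_div hy0.ne' hε.ne']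
          have hscal : 1 + 1/r * (Real.log y - Real.log ε) ≤ (1 + 1/(r*q) + D) * L := by
            have hr0 : (0:ℝ) < 1/r := by positivity
            have e1 : 1/r * (Real.log y - Real.log ε)
                = 1/r * Real.log y + 1/r * (-Real.log ε) := by ring
            have e2 : (1 + 1/(r*q) + D) * L = L + 1/(r*q) * L + D * L := by ring
            have i1 : 1/r * Real.log y ≤ 1/(r*q) * L := by
              have : Real.log y ≤ L / q := by
                rw [le_div_iff₀ hq]; nlinarith
              calc 1/r * Real.log y ≤ 1/r * (L/q) :=
                    mul_le_mul_of_nonneg_left this hr0.le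
                _ = 1/(r*q) * L := by field_simp
            have i2 : 1/r * (-Real.log ε) ≤ D * L := by
              have hr1 : 1/r ≤ 1 := by
                rw [div_le_one (by linarith)]; linarith
              have step : 1/r * (-Real.log ε) ≤ D := by
                rcases le_or_gt (-Real.log ε) 0 with h | h
                · nlinarith
                · nlinarith
              nlinarith
            linarith
          have hyL : 0 ≤ y * (harmonic m : ℝ) → True := fun _ => trivial
          calc y * (harmonic m : ℝ) ≤ y * (1 + 1/r * (Real.log y - Real.log ε)) := by
                apply mul_le_mul_of_nonneg_left _ hy
                linarith
            _ ≤ y * ((1 + 1/(r*q) + D) * L) := mul_le_mul_of_nonneg_left hscal hy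
            _ = (1 + 1/(r*q) + D) * (y * L) := by ring
      _ = ENNReal.ofReal (1 + 1/(r*q) + D) * ENNReal.ofReal (y * L) := by
          rw [ENNReal.ofReal_mul (by positivity)]

lemma caseB_lower {r ε q : ℝ} (hr : 1 < r) (hε : 0 < ε) (hq : 0 < q) :
    ∃ A B : ℝ, 0 ≤ A ∧ 0 ≤ B ∧ ∀ y : ℝ, 0 ≤ y →
      ENNReal.ofReal (y * Real.log (max (y^q) (Real.exp 1)))
        ≤ ENNReal.ofReal A * Tf r r ε y + ENNReal.ofReal B := by
  set y₀ : ℝ := max (max (2*ε) (Real.exp (1/q))) (Real.exp (2*|Real.log (2*ε)| + 1)) with hy₀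
  have hy₀0 : 0 < y₀ := lt_of_lt_of_le (by linarith) ((le_max_left _ _).trans (le_max_left _ _))
  set B : ℝ := y₀ * Real.log (max (y₀^q) (Real.exp 1)) with hB
  have hB0 : 0 ≤ B := by
    have := one_le_logmax (y := y₀) (q := q)
    rw [hB]; nlinarith
  refine ⟨4*r*q, B, by positivity, hB0, fun y hy => ?_⟩
  rcases le_or_gt y y₀ with hyy | hyy
  · -- small y : bound by B
    have hgB : y * Real.log (max (y^q) (Real.exp 1)) ≤ B := by
      rw [hB]
      have hmax : max (y^q) (Real.exp 1) ≤ max (y₀^q) (Real.exp 1) := by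
        apply max_le_max _ le_rfl
        exact Real.rpow_le_rpow hy hyy hq.le
      have hlog : Real.log (max (y^q) (Real.exp 1)) ≤ Real.log (max (y₀^q) (Real.exp 1)) :=
        Real.log_le_log (lt_of_lt_of_le (Real.exp_pos 1) (le_max_right _ _)) hmax
      have h1 : (1:ℝ) ≤ Real.log (max (y^q) (Real.exp 1)) := one_le_logmax
      nlinarith
    calc ENNReal.ofReal (y * Real.log (max (y^q) (Real.exp 1))) ≤ ENNReal.ofReal B :=
          ENNReal.ofReal_le_ofReal hgB
      _ ≤ _ := le_add_self
  · -- large y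
    have hy2ε : 2*ε < y := lt_of_le_of_lt ((le_max_left _ _).trans (le_max_left _ _)) hyy
    have hy0 : (0:ℝ) < y := by linarith
    have hyq : Real.exp 1 ≤ y ^ q := by
      have h1 : Real.exp (1/q) ≤ y :=
        le_of_lt (lt_of_le_of_lt ((le_max_right _ _).trans (le_max_left _ _)) hyy)
      calc Real.exp 1 = (Real.exp (1/q)) ^ q := by
            rw [Real.rpow_def_of_pos (Real.exp_pos _), Real.log_exp,
              show 1/q * q = 1 by field_simp]
        _ ≤ y ^ q := Real.rpow_le_rpow (Real.exp_pos _).le h1 hq.le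
    have hlogy : 2*|Real.log (2*ε)| + 1 ≤ Real.log y := by
      have h1 : Real.exp (2*|Real.log (2*ε)| + 1) ≤ y :=
        le_of_lt (lt_of_le_of_lt (le_max_right _ _) hyy)
      calc 2*|Real.log (2*ε)| + 1 = Real.log (Real.exp (2*|Real.log (2*ε)| + 1)) :=
            (Real.log_exp _).symm
        _ ≤ Real.log y := Real.log_le_log (Real.exp_pos _) h1
    have hlogy1 : 1 ≤ Real.log y := by
      have := abs_nonneg (Real.log (2*ε)); linarith
    have hLval : Real.log (max (y^q) (Real.exp 1)) = q * Real.log y := by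
      rw [max_eq_left hyq, Real.log_rpow hy0]
    -- key lower bound on Tf
    set M : ℝ := (y/(2*ε)) ^ (1/r) with hM
    have hM1 : 1 ≤ M := by
      rw [hM]
      apply Real.one_le_rpow (by rw [le_div_iff₀ (by linarith)]; linarith)
        (le_of_lt (one_div_pos.mpr (by linarith)))
    set m : ℕ := ⌊M⌋₊ with hm
    have hm1 : 1 ≤ m := Nat.le_floor (by exact_mod_cast hM1)
    have hmM : (m:ℝ) ≤ M := Nat.floor_le (by linarith)
    have hMr : M ^ r = y / (2*ε) := by
      rw [hM, ← Real.rpow_mul (div_nonneg hy0.le (by linarith))]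
      rw [show 1/r * r = 1 by field_simp, Real.rpow_one]
    have hterm : ∀ n ∈ range m, ENNReal.ofReal (y/2 * ((n:ℝ)+1)⁻¹)
        ≤ ENNReal.ofReal (((n:ℝ)+1) ^ (r-1)) * ENNReal.ofReal (y / ((n:ℝ)+1) ^ r - ε) := by
      intro n hn
      rw [Finset.mem_range] at hn
      have hpos : (0:ℝ) < (n:ℝ)+1 := by positivity
      have hppos : (0:ℝ) < ((n:ℝ)+1) ^ r := Real.rpow_pos_of_pos hpos _
      have hpow : ((n:ℝ)+1) ^ r ≤ y / (2*ε) := by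
        rw [← hMr]
        apply Real.rpow_le_rpow hpos.le _ (by linarith : (0:ℝ) ≤ r)
        have : ((n:ℝ)+1) ≤ (m:ℝ) := by exact_mod_cast hn
        linarith
      have h3 : y / ((n:ℝ)+1) ^ r - ε ≥ y / (2*((n:ℝ)+1) ^ r) := by
        have hεle : ε ≤ y / (2 * ((n:ℝ)+1) ^ r) := by
          rw [le_div_iff₀ (by positivity)]
          rw [le_div_iff₀ (by positivity)] at hpow
          nlinarith
        have : y / ((n:ℝ)+1) ^ r - y / (2*((n:ℝ)+1) ^ r) = y / (2*((n:ℝ)+1) ^ r) := by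
          field_simp; ring
        linarith
      have h2 : y/2 * ((n:ℝ)+1)⁻¹ ≤ ((n:ℝ)+1) ^ (r-1) * (y / ((n:ℝ)+1) ^ r - ε) := by
        have hrpow : ((n:ℝ)+1) ^ r = ((n:ℝ)+1) ^ (r-1) * ((n:ℝ)+1) := by
          nth_rewrite 1 [show r = (r-1) + 1 by ring]
          rw [Real.rpow_add_one hpos.ne']
        have hr1pos : (0:ℝ) < ((n:ℝ)+1) ^ (r-1) := Real.rpow_pos_of_pos hpos _
        have heq : ((n:ℝ)+1) ^ (r-1) * (y / (2*((n:ℝ)+1) ^ r)) = y/2 * ((n:ℝ)+1)⁻¹ := by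
          rw [hrpow]
          field_simp
        calc y/2 * ((n:ℝ)+1)⁻¹ = ((n:ℝ)+1) ^ (r-1) * (y / (2*((n:ℝ)+1) ^ r)) := heq.symm
          _ ≤ ((n:ℝ)+1) ^ (r-1) * (y / ((n:ℝ)+1) ^ r - ε) :=
              mul_le_mul_of_nonneg_left h3 hr1pos.le
      calc ENNReal.ofReal (y/2 * ((n:ℝ)+1)⁻¹)
          ≤ ENNReal.ofReal (((n:ℝ)+1) ^ (r-1) * (y / ((n:ℝ)+1) ^ r - ε)) :=
            ENNReal.ofReal_le_ofReal h2
        _ = _ := ENNReal.ofReal_mul (Real.rpow_nonneg hpos.le _)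
    have key : ENNReal.ofReal (y * Real.log y / (4*r)) ≤ Tf r r ε y := by
      calc ENNReal.ofReal (y * Real.log y / (4*r))
          ≤ ENNReal.ofReal (y/2 * (harmonic m : ℝ)) := by
            apply ENNReal.ofReal_le_ofReal
            have h1 : Real.log ((m:ℝ)+1) ≤ (harmonic m : ℝ) := by
              have := log_add_one_le_harmonic m
              push_cast at this
              exact this
            have h2 : Real.log M ≤ Real.log ((m:ℝ)+1) := by
              apply Real.log_le_log (by linarith)
              have := Nat.lt_floor_add_one M
              push_cast
              linarith
            have h3 : Real.log M = 1/r * (Real.log y - Real.log (2*ε)) := by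
              rw [hM, Real.log_rpow (div_pos hy0 (by linarith)),
                Real.log_div hy0.ne' (by linarith : (2*ε) ≠ 0)]
            have h4 : Real.log y - Real.log (2*ε) ≥ Real.log y / 2 := by
              have habs : Real.log (2*ε) ≤ |Real.log (2*ε)| := le_abs_self _
              linarith [hlogy, abs_nonneg (Real.log (2*ε))]
            have h5 : (harmonic m : ℝ) ≥ 1/r * (Real.log y / 2) := by
              have : 1/r * (Real.log y / 2) ≤ 1/r * (Real.log y - Real.log (2*ε)) := by
                apply mul_le_mul_of_nonneg_left h4 (by positivity)
              linarith
            calc y * Real.log y / (4*r) = y/2 * (1/r * (Real.log y / 2)) := by ring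
              _ ≤ y/2 * (harmonic m : ℝ) := mul_le_mul_of_nonneg_left h5 (by linarith)
        _ = ∑ n ∈ range m, ENNReal.ofReal (y/2 * ((n:ℝ)+1)⁻¹) := by
            rw [← ENNReal.ofReal_sum_of_nonneg fun n _ => by positivity, ← Finset.mul_sum,
              harmonic_cast]
        _ ≤ ∑ n ∈ range m,
              ENNReal.ofReal (((n:ℝ)+1) ^ (r-1)) * ENNReal.ofReal (y / ((n:ℝ)+1) ^ r - ε) :=
            Finset.sum_le_sum hterm
        _ ≤ Tf r r ε y := ENNReal.sum_le_tsum _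
    calc ENNReal.ofReal (y * Real.log (max (y^q) (Real.exp 1)))
        = ENNReal.ofReal (4*r*q) * ENNReal.ofReal (y * Real.log y / (4*r)) := by
          rw [← ENNReal.ofReal_mul (by positivity), hLval]
          congr 1
          field_simp
      _ ≤ ENNReal.ofReal (4*r*q) * Tf r r ε y := mul_le_mul_right key _
      _ ≤ _ := le_add_right le_rfl

/-- The equivalence (from Lemma 3.2 applied in the proof of Theorem 2.1):
`∫_ε^∞ ∑_{n≥1} n^{r-1} P(|X|^{1/q} > x n^{1/(pq)}) dx < ∞` for all `ε > 0` iff the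
moment condition depending on the relation of `q` to `1/(pr)` holds. -/
theorem stmt_15 {Ω : Type*} [MeasurableSpace Ω] (μ : Measure Ω) [IsProbabilityMeasure μ]
    (X : Ω → ℝ) (hmeas : Measurable X)
    (p r q : ℝ) (hp0 : 0 < p) (hp2 : p < 2) (hr : 1 < r) (hq : 0 < q) :
    (∀ ε : ℝ, 0 < ε →
        ∫⁻ x in Set.Ioi ε, ∑' n : ℕ, ENNReal.ofReal (((n : ℝ) + 1) ^ (r - 1)) *
          μ {ω | x * ((n : ℝ) + 1) ^ (1 / (p * q)) < |X ω| ^ (1 / q)} < ⊤) ↔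
      ((q < 1 / (p * r) → Integrable (fun ω => |X ω| ^ (1 / q)) μ) ∧
       (q = 1 / (p * r) →
          Integrable (fun ω => |X ω| ^ (p * r) * Real.log (max |X ω| (Real.exp 1))) μ) ∧
       (1 / (p * r) < q → Integrable (fun ω => |X ω| ^ (p * r)) μ)) := by
  have hα0 : 0 < 1/(p*q) := by positivity
  set Y : Ω → ℝ := fun ω => |X ω| ^ (1/q) with hYdef
  have hY : Measurable Y :=
    (Real.continuous_rpow_const (by positivity)).measurable.comp hmeas.abs
  have hYnn : ∀ ω, 0 ≤ Y ω := fun ω => Real.rpow_nonneg (abs_nonneg _) _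
  have hred : ∀ ε : ℝ,
      (∫⁻ x in Set.Ioi ε, ∑' n : ℕ, ENNReal.ofReal (((n : ℝ) + 1) ^ (r - 1)) *
          μ {ω | x * ((n : ℝ) + 1) ^ (1 / (p * q)) < |X ω| ^ (1 / q)})
        = ∫⁻ ω, Tf (1/(p*q)) r ε (Y ω) ∂μ := by
    intro ε
    have h := reduce_all μ Y hY (fun n => ((n:ℝ)+1) ^ (r-1)) (fun n => ((n:ℝ)+1) ^ (1/(p*q)))
      (fun n => Real.rpow_pos_of_pos (by positivity) _) ε
    exact h
  rcases lt_trichotomy q (1/(p*r)) with h3 | h3 | h3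
  · -- q < 1/(pr) : α > r
    have hαr : r < 1/(p*q) := by
      rw [lt_div_iff₀ (by positivity)] at h3 ⊢
      nlinarith
    constructor
    · intro h
      refine ⟨fun _ => ?_, fun he => absurd he (ne_of_lt h3), fun hgt => absurd hgt (lt_asymm h3)⟩
      have h1 := h 1 one_pos
      rw [hred 1] at h1
      refine ⟨hY.aestronglyMeasurable, (hasFiniteIntegral_iff_ofReal (ae_of_all _ hYnn)).2 ?_⟩
      calc ∫⁻ ω, ENNReal.ofReal (Y ω) ∂μ
          ≤ ∫⁻ ω, (Tf (1/(p*q)) r 1 (Y ω) + ENNReal.ofReal 1) ∂μ := by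
            apply lintegral_mono
            intro ω
            calc ENNReal.ofReal (Y ω) = ENNReal.ofReal ((Y ω - 1) + 1) := by ring_nf
              _ ≤ ENNReal.ofReal (Y ω - 1) + ENNReal.ofReal 1 := ENNReal.ofReal_add_le
              _ ≤ Tf (1/(p*q)) r 1 (Y ω) + ENNReal.ofReal 1 :=
                  add_le_add_left (Tf_lower0 _) _
        _ = (∫⁻ ω, Tf (1/(p*q)) r 1 (Y ω) ∂μ) + ENNReal.ofReal 1 * μ Set.univ := by
            rw [lintegral_add_right _ measurable_const, lintegral_const]
        _ < ⊤ := by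
            rw [measure_univ, mul_one]
            exact ENNReal.add_lt_top.2 ⟨h1, ENNReal.ofReal_lt_top⟩
    · rintro ⟨h1, -, -⟩ ε hε
      have hint := h1 h3
      rw [hred ε]
      obtain ⟨S, hS, hle⟩ := Tf_le_linear hα0 hαr hε
      calc ∫⁻ ω, Tf (1/(p*q)) r ε (Y ω) ∂μ ≤ ∫⁻ ω, S * ENNReal.ofReal (Y ω) ∂μ :=
            lintegral_mono fun ω => hle (Y ω)
        _ = S * ∫⁻ ω, ENNReal.ofReal (Y ω) ∂μ := lintegral_const_mul' _ _ hS
        _ < ⊤ := ENNReal.mul_lt_top hS.lt_top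
            ((hasFiniteIntegral_iff_ofReal (ae_of_all _ hYnn)).1 hint.2)
  · -- q = 1/(pr) : α = r
    have hprq : p * r = 1/q := by
      rw [h3]
      field_simp
    have hαr : 1/(p*q) = r := by
      rw [h3]
      field_simp
    have heq : ∀ ω, |X ω| ^ (p*r) * Real.log (max |X ω| (Real.exp 1))
        = Y ω * Real.log (max ((Y ω)^q) (Real.exp 1)) := by
      intro ω
      have h1 : (Y ω) ^ q = |X ω| := by
        rw [hYdef]
        simp only
        rw [← Real.rpow_mul (abs_nonneg _), show 1/q * q = 1 by field_simp, Real.rpow_one]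
      rw [h1, hYdef]
      simp only
      rw [hprq]
    have hEnn : ∀ ω, 0 ≤ |X ω| ^ (p*r) * Real.log (max |X ω| (Real.exp 1)) := by
      intro ω
      apply mul_nonneg (Real.rpow_nonneg (abs_nonneg _) _)
      apply Real.log_nonneg
      have := Real.add_one_le_exp (1:ℝ)
      have h2 := le_max_right |X ω| (Real.exp 1)
      linarith
    have hZmeas : Measurable fun ω => |X ω| ^ (p*r) * Real.log (max |X ω| (Real.exp 1)) := by
      apply Measurable.mul
      · exact (Real.continuous_rpow_const (by positivity)).measurable.comp hmeas.abs
      · exact Real.measurable_log.comp (hmeas.abs.max measurable_const)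
    constructor
    · intro h
      refine ⟨fun hlt => absurd hlt (by rw [h3]; exact lt_irrefl _), fun _ => ?_,
        fun hgt => absurd hgt (by rw [h3]; exact lt_irrefl _)⟩
      have h1 := h 1 one_pos
      rw [hred 1, hαr] at h1
      obtain ⟨A, B, hA, hB, hle⟩ := caseB_lower (ε := 1) (q := q) hr one_pos hq
      refine ⟨hZmeas.aestronglyMeasurable, (hasFiniteIntegral_iff_ofReal (ae_of_all _ hEnn)).2 ?_⟩
      calc ∫⁻ ω, ENNReal.ofReal (|X ω| ^ (p*r) * Real.log (max |X ω| (Real.exp 1))) ∂μ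
          = ∫⁻ ω, ENNReal.ofReal (Y ω * Real.log (max ((Y ω)^q) (Real.exp 1))) ∂μ := by
            apply lintegral_congr
            intro ω
            rw [heq ω]
        _ ≤ ∫⁻ ω, (ENNReal.ofReal A * Tf r r 1 (Y ω) + ENNReal.ofReal B) ∂μ :=
            lintegral_mono fun ω => hle (Y ω) (hYnn ω)
        _ = ENNReal.ofReal A * (∫⁻ ω, Tf r r 1 (Y ω) ∂μ) + ENNReal.ofReal B * μ Set.univ := by
            rw [lintegral_add_right _ measurable_const, lintegral_const,
              lintegral_const_mul' _ _ ENNReal.ofReal_ne_top]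
        _ < ⊤ := by
            rw [measure_univ, mul_one]
            exact ENNReal.add_lt_top.2 ⟨ENNReal.mul_lt_top ENNReal.ofReal_lt_top h1,
              ENNReal.ofReal_lt_top⟩
    · rintro ⟨-, h2, -⟩ ε hε
      have hint := h2 h3
      rw [hred ε, hαr]
      obtain ⟨A, hA, hle⟩ := caseB_upper (ε := ε) (q := q) hr hε hq
      have hfin : ∫⁻ ω, ENNReal.ofReal (Y ω * Real.log (max ((Y ω)^q) (Real.exp 1))) ∂μ < ⊤ := by
        have := (hasFiniteIntegral_iff_ofReal (ae_of_all _ hEnn)).1 hint.2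
        calc ∫⁻ ω, ENNReal.ofReal (Y ω * Real.log (max ((Y ω)^q) (Real.exp 1))) ∂μ
            = ∫⁻ ω, ENNReal.ofReal (|X ω| ^ (p*r) * Real.log (max |X ω| (Real.exp 1))) ∂μ := by
              apply lintegral_congr
              intro ω
              rw [heq ω]
          _ < ⊤ := this
      calc ∫⁻ ω, Tf r r ε (Y ω) ∂μ
          ≤ ∫⁻ ω, ENNReal.ofReal A *
              ENNReal.ofReal (Y ω * Real.log (max ((Y ω)^q) (Real.exp 1))) ∂μ :=
            lintegral_mono fun ω => hle (Y ω) (hYnn ω)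
        _ = ENNReal.ofReal A *
              ∫⁻ ω, ENNReal.ofReal (Y ω * Real.log (max ((Y ω)^q) (Real.exp 1))) ∂μ :=
            lintegral_const_mul' _ _ ENNReal.ofReal_ne_top
        _ < ⊤ := ENNReal.mul_lt_top ENNReal.ofReal_lt_top hfin
  · -- q > 1/(pr) : α < r
    have hαr : 1/(p*q) < r := by
      rw [div_lt_iff₀ (by positivity)] at h3
      rw [div_lt_iff₀ (by positivity)]
      nlinarith
    have heq : ∀ ω, |X ω| ^ (p*r) = (Y ω) ^ (r/(1/(p*q))) := by
      intro ω
      rw [hYdef]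
      simp only
      rw [← Real.rpow_mul (abs_nonneg _)]
      congr 1
      field_simp
    have hEnn : ∀ ω, 0 ≤ |X ω| ^ (p*r) := fun ω => Real.rpow_nonneg (abs_nonneg _) _
    have hZmeas : Measurable fun ω => |X ω| ^ (p*r) :=
      (Real.continuous_rpow_const (by positivity)).measurable.comp hmeas.abs
    constructor
    · intro h
      refine ⟨fun hlt => absurd hlt (lt_asymm h3), fun he => absurd he.symm (ne_of_lt h3),
        fun _ => ?_⟩
      have h1 := h 1 one_pos
      rw [hred 1] at h1
      obtain ⟨A, B, hA, hB, hle⟩ := rpow_le_Tf hα0 hαr one_pos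
      refine ⟨hZmeas.aestronglyMeasurable, (hasFiniteIntegral_iff_ofReal (ae_of_all _ hEnn)).2 ?_⟩
      calc ∫⁻ ω, ENNReal.ofReal (|X ω| ^ (p*r)) ∂μ
          = ∫⁻ ω, ENNReal.ofReal ((Y ω) ^ (r/(1/(p*q)))) ∂μ := by
            apply lintegral_congr
            intro ω
            rw [heq ω]
        _ ≤ ∫⁻ ω, (ENNReal.ofReal A * Tf (1/(p*q)) r 1 (Y ω) + ENNReal.ofReal B) ∂μ :=
            lintegral_mono fun ω => hle (Y ω) (hYnn ω)
        _ = ENNReal.ofReal A * (∫⁻ ω, Tf (1/(p*q)) r 1 (Y ω) ∂μ)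
              + ENNReal.ofReal B * μ Set.univ := by
            rw [lintegral_add_right _ measurable_const, lintegral_const,
              lintegral_const_mul' _ _ ENNReal.ofReal_ne_top]
        _ < ⊤ := by
            rw [measure_univ, mul_one]
            exact ENNReal.add_lt_top.2 ⟨ENNReal.mul_lt_top ENNReal.ofReal_lt_top h1,
              ENNReal.ofReal_lt_top⟩
    · rintro ⟨-, -, h2⟩ ε hε
      have hint := h2 h3
      rw [hred ε]
      obtain ⟨A, hA, hle⟩ := Tf_le_rpow hα0 hαr hε
      have hfin : ∫⁻ ω, ENNReal.ofReal ((Y ω) ^ (r/(1/(p*q)))) ∂μ < ⊤ := by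
        have := (hasFiniteIntegral_iff_ofReal (ae_of_all _ hEnn)).1 hint.2
        calc ∫⁻ ω, ENNReal.ofReal ((Y ω) ^ (r/(1/(p*q)))) ∂μ
            = ∫⁻ ω, ENNReal.ofReal (|X ω| ^ (p*r)) ∂μ := by
              apply lintegral_congr
              intro ω
              rw [heq ω]
          _ < ⊤ := this
      calc ∫⁻ ω, Tf (1/(p*q)) r ε (Y ω) ∂μ
          ≤ ∫⁻ ω, ENNReal.ofReal A * ENNReal.ofReal ((Y ω) ^ (r/(1/(p*q)))) ∂μ :=
            lintegral_mono fun ω => hle (Y ω) (hYnn ω)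
        _ = ENNReal.ofReal A * ∫⁻ ω, ENNReal.ofReal ((Y ω) ^ (r/(1/(p*q)))) ∂μ :=
            lintegral_const_mul' _ _ ENNReal.ofReal_ne_top
        _ < ⊤ := ENNReal.mul_lt_top ENNReal.ofReal_lt_top hfin

end
end

section
/- Let {X_i; 1 ≤ i ≤ n} be negatively associated random variables, let t_1, ..., t_n be real numbers, and let N ≥ 1 be an integer. Then the probability that at least N of the events {X_i > t_i}, 1 ≤ i ≤ n, occur simultaneously is at most ( ∑_{i=1}^n P(X_i > t_i) )^N; that is, P( #{ i ∈ {1,...,n} : X_i > t_i } ≥ N ) ≤ ( ∑_{i=1}^n P(X_i > t_i) )^N. -/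
open MeasureTheory Finset

noncomputable section

open scoped Classical in
/-- Key lemma: for NA random variables, the probability that all events `{X_i > t_i}`,
`i ∈ S`, occur is at most the product of the individual probabilities. -/
lemma negAssoc_prod_bound {Ω : Type*} [MeasurableSpace Ω] (μ : Measure Ω)
    [IsProbabilityMeasure μ] {n : ℕ} (X : Fin n → Ω → ℝ) (hmeas : ∀ i, Measurable (X i))
    (hNA : NegAssoc μ X) (t : Fin n → ℝ) (S : Finset (Fin n)) :
    (μ (⋂ i ∈ S, {ω | t i < X i ω})).toReal ≤
      ∏ i ∈ S, (μ {ω | t i < X i ω}).toReal := by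
  set s : Fin n → Set Ω := fun i => {ω | t i < X i ω} with hs_def
  have hs : ∀ i, MeasurableSet (s i) := fun i =>
    measurableSet_lt measurable_const (hmeas i)
  induction S using Finset.induction_on with
  | empty => simp
  | @insert j S hj ih =>
    rcases S.eq_empty_or_nonempty with rfl | hSne
    · simp
    · have hSmeas : MeasurableSet (⋂ i ∈ S, s i) :=
        MeasurableSet.biInter S.countable_toSet (fun i _ => hs i)
      -- the NA inequality applied to indicators
      set f : (Fin n → ℝ) → ℝ := fun x => if t j < x j then 1 else 0 with hf_def
      set g : (Fin n → ℝ) → ℝ := fun x => ∏ i ∈ S, if t i < x i then 1 else 0 with hg_def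
      have hf_eq : (fun ω => f (fun i => X i ω)) = (s j).indicator (fun _ => 1) := by
        funext ω
        simp [hf_def, Set.indicator_apply, hs_def, Set.mem_setOf_eq]
      have hg_eq : (fun ω => g (fun i => X i ω)) =
          (⋂ i ∈ S, s i).indicator (fun _ => 1) := by
        funext ω
        simp only [hg_def, Finset.prod_boole, Set.indicator_apply, Set.mem_iInter,
          hs_def, Set.mem_setOf_eq]
        by_cases h : ∀ i ∈ S, t i < X i ω <;> simp [h]
      have hfg_eq : (fun ω => f (fun i => X i ω) * g (fun i => X i ω)) =
          (s j ∩ ⋂ i ∈ S, s i).indicator (fun _ => (1:ℝ)) := by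
        funext ω
        simp only [hf_def, hg_def, Finset.prod_boole, Set.indicator_apply,
          Set.mem_inter_iff, Set.mem_iInter, hs_def, Set.mem_setOf_eq]
        by_cases h1 : t j < X j ω <;> by_cases h2 : ∀ i ∈ S, t i < X i ω <;>
          simp [h1, h2]
      have hfint : Integrable (fun ω => f (fun i => X i ω)) μ := by
        rw [hf_eq]; exact (integrable_const (1:ℝ)).indicator (hs j)
      have hgint : Integrable (fun ω => g (fun i => X i ω)) μ := by
        rw [hg_eq]; exact (integrable_const (1:ℝ)).indicator hSmeas
      have hfgint : Integrable (fun ω => f (fun i => X i ω) * g (fun i => X i ω)) μ := by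
        rw [hfg_eq]; exact (integrable_const (1:ℝ)).indicator ((hs j).inter hSmeas)
      have hfmono : ∀ x y : Fin n → ℝ, (∀ i ∈ ({j} : Finset (Fin n)), x i ≤ y i) →
          f x ≤ f y := by
        intro x y h
        have hxy := h j (Finset.mem_singleton_self j)
        by_cases hx : t j < x j
        · have : t j < y j := lt_of_lt_of_le hx hxy
          simp [hf_def, hx, this]
        · simp only [hf_def, hx, if_false]
          split_ifs <;> norm_num
      have hgmono : ∀ x y : Fin n → ℝ, (∀ i ∈ S, x i ≤ y i) → g x ≤ g y := by
        intro x y h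
        refine Finset.prod_le_prod (fun i _ => by positivity) (fun i hi => ?_)
        by_cases hx : t i < x i
        · have : t i < y i := lt_of_lt_of_le hx (h i hi)
          simp [hx, this]
        · simp only [hx, if_false]
          split_ifs <;> norm_num
      have hdisj : Disjoint ({j} : Finset (Fin n)) S := by
        simp [Finset.disjoint_singleton_left, hj]
      have hIf : ∫ ω, f (fun i => X i ω) ∂μ = (μ (s j)).toReal := by
        rw [hf_eq]; exact integral_indicator_one (hs j)
      have hIg : ∫ ω, g (fun i => X i ω) ∂μ = (μ (⋂ i ∈ S, s i)).toReal := by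
        rw [hg_eq]; exact integral_indicator_one hSmeas
      have hIfg : ∫ ω, f (fun i => X i ω) * g (fun i => X i ω) ∂μ =
          (μ (s j ∩ ⋂ i ∈ S, s i)).toReal := by
        rw [hfg_eq]; exact integral_indicator_one ((hs j).inter hSmeas)
      have hNAapp := hNA {j} S (Finset.singleton_nonempty j) hSne hdisj f g
        hfmono hgmono hfint hgint hfgint
      rw [hIf, hIg, hIfg] at hNAapp
      have hstep : (μ (⋂ i ∈ insert j S, s i)).toReal ≤
          (μ (s j)).toReal * (μ (⋂ i ∈ S, s i)).toReal := by
        rwa [Finset.set_biInter_insert]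
      calc (μ (⋂ i ∈ insert j S, s i)).toReal
          ≤ (μ (s j)).toReal * (μ (⋂ i ∈ S, s i)).toReal := hstep
        _ ≤ (μ (s j)).toReal * ∏ i ∈ S, (μ (s i)).toReal :=
            mul_le_mul_of_nonneg_left ih ENNReal.toReal_nonneg
        _ = ∏ i ∈ insert j S, (μ (s i)).toReal := by rw [Finset.prod_insert hj]

open scoped Classical in
/-- For negatively associated random variables `X_1, …, X_n` and reals `t_1, …, t_n`,
the probability that at least `N` of the events `{X_i > t_i}` occur simultaneously is
at most `(∑_{i=1}^n P(X_i > t_i))^N`. -/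
theorem stmt_17 {Ω : Type*} [MeasurableSpace Ω] (μ : Measure Ω) [IsProbabilityMeasure μ]
    (n : ℕ) (X : Fin n → Ω → ℝ) (hmeas : ∀ i, Measurable (X i))
    (hNA : NegAssoc μ X) (t : Fin n → ℝ) (N : ℕ) (hN : 1 ≤ N) :
    (μ {ω | N ≤ (Finset.univ.filter fun i : Fin n => t i < X i ω).card}).toReal ≤
      (∑ i : Fin n, (μ {ω | t i < X i ω}).toReal) ^ N := by
  classical
  set s : Fin n → Set Ω := fun i => {ω | t i < X i ω} with hs_def
  set F : Finset (Fin N → Fin n) := Finset.univ.filter Function.Injective with hF_def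
  -- the event is contained in the union over injective tuples of the intersections
  have hsub : {ω | N ≤ (Finset.univ.filter fun i : Fin n => t i < X i ω).card} ⊆
      ⋃ f ∈ F, ⋂ j : Fin N, s (f j) := by
    intro ω hω
    have hω' : N ≤ (Finset.univ.filter fun i : Fin n => t i < X i ω).card := hω
    obtain ⟨T, hT_sub, hT_card⟩ := Finset.exists_subset_card_eq hω'
    set e := T.orderIsoOfFin hT_card with he_def
    refine Set.mem_iUnion₂.2 ⟨fun j => (e j : Fin n), ?_, ?_⟩
    · refine Finset.mem_filter.2 ⟨Finset.mem_univ _, fun a b hab => ?_⟩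
      exact e.injective (Subtype.ext hab)
    · refine Set.mem_iInter.2 fun j => ?_
      have hmem : ((e j : Fin n)) ∈ T := (e j).2
      have := Finset.mem_filter.1 (hT_sub hmem)
      exact this.2
  -- union bound and individual bounds
  have h1 : μ {ω | N ≤ (Finset.univ.filter fun i : Fin n => t i < X i ω).card} ≤
      ∑ f ∈ F, μ (⋂ j : Fin N, s (f j)) :=
    le_trans (measure_mono hsub) (measure_biUnion_finset_le F _)
  have h2 : (μ {ω | N ≤ (Finset.univ.filter fun i : Fin n => t i < X i ω).card}).toReal ≤
      ∑ f ∈ F, (μ (⋂ j : Fin N, s (f j))).toReal := by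
    rw [← ENNReal.toReal_sum (fun f _ => measure_ne_top μ _)]
    exact ENNReal.toReal_mono (ENNReal.sum_ne_top.2 fun f _ => measure_ne_top μ _) h1
  refine h2.trans ?_
  have h3 : ∀ f ∈ F, (μ (⋂ j : Fin N, s (f j))).toReal ≤ ∏ j : Fin N, (μ (s (f j))).toReal := by
    intro f hf
    have hfinj : Function.Injective f := (Finset.mem_filter.1 hf).2
    have hset : (⋂ j : Fin N, s (f j)) = ⋂ i ∈ Finset.image f Finset.univ, s i := by
      ext ω
      simp [Set.mem_iInter]
    have := negAssoc_prod_bound μ X hmeas hNA t (Finset.image f Finset.univ)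
    rw [← hset] at this
    refine this.trans ?_
    rw [Finset.prod_image (fun a _ b _ h => hfinj h)]
  calc ∑ f ∈ F, (μ (⋂ j : Fin N, s (f j))).toReal
      ≤ ∑ f ∈ F, ∏ j : Fin N, (μ (s (f j))).toReal := Finset.sum_le_sum h3
    _ ≤ ∑ f : Fin N → Fin n, ∏ j : Fin N, (μ (s (f j))).toReal :=
        Finset.sum_le_sum_of_subset_of_nonneg (Finset.filter_subset _ _)
          (fun f _ _ => Finset.prod_nonneg fun j _ => ENNReal.toReal_nonneg)
    _ = (∑ i : Fin n, (μ (s i)).toReal) ^ N := by rw [Fintype.sum_pow]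

end
end
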